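/- arXiv:0911.5019 — 6 statements merged into one kernel-verified Lean document; each statement's English description precedes it below -/
import Mathlib

section
/- For every positive integer n, the sum of (-1)^(number of parts) over all partitions of n into distinct parts whose smallest part is odd equals (-1)^k if n = k^2 for some positive integer k, and equals 0 otherwise. -/
open scoped Classical in
/-- `Pdo n` : partitions of `n` into distinct parts with smallest part odd,
encoded as finsets of parts. -/
noncomputable def Pdo (n : ℕ) : Finset (Finset ℕ) :=
  (Finset.range (n + 1)).powerset.filter
    (fun S => S.sum id = n ∧ ∃ m ∈ S, Odd m ∧ ∀ x ∈ S, m ≤ x)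

namespace PdoAux

open Finset
open scoped Classical

/-! ### Basic facts about membership in `Pdo` -/

lemma mem_Pdo {n : ℕ} {S : Finset ℕ} :
    S ∈ Pdo n ↔ S ⊆ Finset.range (n + 1) ∧ S.sum id = n ∧
      ∃ m ∈ S, Odd m ∧ ∀ x ∈ S, m ≤ x := by
  simp [Pdo, Finset.mem_filter, Finset.mem_powerset, and_assoc]

lemma mem_Pdo_of {n : ℕ} {S : Finset ℕ} (hsum : S.sum id = n)
    (hm : ∃ m ∈ S, Odd m ∧ ∀ x ∈ S, m ≤ x) : S ∈ Pdo n := by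
  rw [mem_Pdo]
  refine ⟨fun x hx => ?_, hsum, hm⟩
  have h1 : x ≤ S.sum id := Finset.single_le_sum (f := id) (fun i _ => Nat.zero_le i) hx
  rw [hsum] at h1
  simp only [Finset.mem_range]
  omega

lemma Pdo_sum {n : ℕ} {S : Finset ℕ} (h : S ∈ Pdo n) : S.sum id = n := (mem_Pdo.1 h).2.1

lemma Pdo_min {n : ℕ} {S : Finset ℕ} (h : S ∈ Pdo n) :
    ∃ m ∈ S, m % 2 = 1 ∧ ∀ x ∈ S, m ≤ x := by
  obtain ⟨m, hm, ho, hle⟩ := (mem_Pdo.1 h).2.2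
  exact ⟨m, hm, Nat.odd_iff.1 ho, hle⟩

lemma Pdo_zero {n : ℕ} {S : Finset ℕ} (h : S ∈ Pdo n) : 0 ∉ S := by
  intro h0
  obtain ⟨m, _, ho, hle⟩ := Pdo_min h
  have := hle 0 h0
  omega

/-! ### The run length, smallest even part, smallest outlying odd part -/

lemma exists_gap (S : Finset ℕ) : ∃ t : ℕ, 2 * t + 1 ∉ S := by
  refine ⟨S.sum id, fun h => ?_⟩
  have h1 : 2 * S.sum id + 1 ≤ S.sum id :=
    le_of_eq_of_le rfl (Finset.single_le_sum (f := id) (fun i _ => Nat.zero_le i) h)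
  omega

/-- The length of the maximal initial run of odd numbers `1, 3, ..., 2a-1` contained in `S`. -/
noncomputable def runL (S : Finset ℕ) : ℕ := Nat.find (exists_gap S)

lemma runL_mem {S : Finset ℕ} {i : ℕ} (h : i < runL S) : 2 * i + 1 ∈ S := by
  have := Nat.find_min (exists_gap S) h
  simpa using this

lemma runL_gap (S : Finset ℕ) : 2 * runL S + 1 ∉ S := Nat.find_spec (exists_gap S)

lemma runL_eq {S : Finset ℕ} {m : ℕ} (h1 : ∀ i, i < m → 2 * i + 1 ∈ S)
    (h2 : 2 * m + 1 ∉ S) : runL S = m := by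
  rw [runL, Nat.find_eq_iff]
  exact ⟨h2, fun k hk => by simpa using h1 k hk⟩

/-- The even parts of `S`. -/
noncomputable def Ev (S : Finset ℕ) : Finset ℕ := S.filter (fun x => x % 2 = 0)

/-- The odd parts of `S` beyond the initial run. -/
noncomputable def Outl (S : Finset ℕ) : Finset ℕ :=
  S.filter (fun x => x % 2 = 1 ∧ 2 * runL S ≤ x)

lemma mem_Ev {S : Finset ℕ} {x : ℕ} : x ∈ Ev S ↔ x ∈ S ∧ x % 2 = 0 := by
  rw [Ev, Finset.mem_filter]

lemma mem_Outl {S : Finset ℕ} {x : ℕ} :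
    x ∈ Outl S ↔ x ∈ S ∧ x % 2 = 1 ∧ 2 * runL S ≤ x := by
  rw [Outl, Finset.mem_filter]

noncomputable def emin (S : Finset ℕ) : ℕ :=
  if h : (Ev S).Nonempty then (Ev S).min' h else 0

noncomputable def omin (S : Finset ℕ) : ℕ :=
  if h : (Outl S).Nonempty then (Outl S).min' h else 0

/-- The merge condition. -/
def MC (S : Finset ℕ) : Prop :=
  (Ev S).Nonempty ∧ 1 ≤ runL S ∧ ∀ x ∈ Outl S, 2 * runL S - 1 + emin S < x

/-- The involution: merge the smallest even part with the top of the initial odd run,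
or split the smallest outlying odd part. -/
noncomputable def invo (S : Finset ℕ) : Finset ℕ :=
  if MC S then
    insert (2 * runL S - 1 + emin S) ((S.erase (emin S)).erase (2 * runL S - 1))
  else if (Outl S).Nonempty then
    insert (2 * runL S + 1) (insert (omin S - (2 * runL S + 1)) (S.erase (omin S)))
  else S

lemma emin_mem {S : Finset ℕ} (h : (Ev S).Nonempty) : emin S ∈ S ∧ emin S % 2 = 0 := by
  have : emin S ∈ Ev S := by rw [emin, dif_pos h]; exact Finset.min'_mem _ _
  exact mem_Ev.1 this

lemma emin_min {S : Finset ℕ} (h : (Ev S).Nonempty) {y : ℕ} (hy : y ∈ S) (hye : y % 2 = 0) :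
    emin S ≤ y := by
  rw [emin, dif_pos h]
  exact Finset.min'_le _ _ (mem_Ev.2 ⟨hy, hye⟩)

lemma omin_mem {S : Finset ℕ} (h : (Outl S).Nonempty) :
    omin S ∈ S ∧ omin S % 2 = 1 ∧ 2 * runL S ≤ omin S := by
  have : omin S ∈ Outl S := by rw [omin, dif_pos h]; exact Finset.min'_mem _ _
  exact mem_Outl.1 this

lemma omin_min {S : Finset ℕ} (h : (Outl S).Nonempty) {y : ℕ} (hy : y ∈ Outl S) :
    omin S ≤ y := by
  rw [omin, dif_pos h]
  exact Finset.min'_le _ _ hy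

/-! ### The merge case -/

theorem merge_main {n : ℕ} {S : Finset ℕ} (hS : S ∈ Pdo n) (hmc : MC S) :
    invo S ∈ Pdo n ∧ S.card = (invo S).card + 1 ∧ invo (invo S) = S := by
  obtain ⟨hEv, ha, hwin⟩ := hmc
  have h0 : 0 ∉ S := Pdo_zero hS
  obtain ⟨hsS, hse⟩ := emin_mem hEv
  have hs2 : 2 ≤ emin S := by
    rcases Nat.eq_zero_or_pos (emin S) with h | h
    · exact absurd (h ▸ hsS) h0
    · omega
  have hwS : 2 * runL S - 1 ∈ S := by
    have h1 := runL_mem (S := S) (i := runL S - 1) (by omega)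
    have h2 : 2 * (runL S - 1) + 1 = 2 * runL S - 1 := by omega
    rwa [h2] at h1
  have hws : 2 * runL S - 1 + emin S ∉ S := by
    intro hmem
    have hx : (2 * runL S - 1 + emin S) ∈ Outl S :=
      mem_Outl.2 ⟨hmem, by omega, by omega⟩
    have := hwin _ hx
    omega
  have hwne : (2 * runL S - 1) ≠ emin S := by omega
  have hwX : 2 * runL S - 1 ∈ S.erase (emin S) := Finset.mem_erase.2 ⟨hwne, hwS⟩
  have hMdef : invo S =
      insert (2 * runL S - 1 + emin S) ((S.erase (emin S)).erase (2 * runL S - 1)) := by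
    rw [invo, if_pos ⟨hEv, ha, hwin⟩]
  have hwsX : 2 * runL S - 1 + emin S ∉ (S.erase (emin S)).erase (2 * runL S - 1) :=
    fun h => hws (Finset.mem_of_mem_erase (Finset.mem_of_mem_erase h))
  have hmemM : ∀ x, x ∈ invo S ↔
      (x = 2 * runL S - 1 + emin S ∨ (x ∈ S ∧ x ≠ emin S ∧ x ≠ 2 * runL S - 1)) := by
    intro x
    rw [hMdef]
    simp only [Finset.mem_insert, Finset.mem_erase]
    tauto
  -- cardinality
  have hcard : S.card = (invo S).card + 1 := by
    have c1 : ((S.erase (emin S)).erase (2 * runL S - 1)).card + 1 = (S.erase (emin S)).card :=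
      Finset.card_erase_add_one hwX
    have c2 : (S.erase (emin S)).card + 1 = S.card := Finset.card_erase_add_one hsS
    have c3 : (invo S).card = ((S.erase (emin S)).erase (2 * runL S - 1)).card + 1 := by
      rw [hMdef]; exact Finset.card_insert_of_notMem hwsX
    omega
  -- sum
  have hsum : (invo S).sum id = n := by
    have e1 : id (emin S) + (S.erase (emin S)).sum id = S.sum id :=
      Finset.add_sum_erase _ id hsS
    have e2 : id (2 * runL S - 1) + ((S.erase (emin S)).erase (2 * runL S - 1)).sum id
        = (S.erase (emin S)).sum id := Finset.add_sum_erase _ id hwX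
    have e3 : (invo S).sum id = id (2 * runL S - 1 + emin S) +
        ((S.erase (emin S)).erase (2 * runL S - 1)).sum id := by
      rw [hMdef]; exact Finset.sum_insert hwsX
    have e4 := Pdo_sum hS
    simp only [id_eq] at e1 e2 e3 e4 ⊢
    omega
  -- smallest part odd
  have hminM : ∃ m ∈ invo S, Odd m ∧ ∀ x ∈ invo S, m ≤ x := by
    rcases (show runL S = 1 ∨ 2 ≤ runL S by omega) with h1 | h2
    · refine ⟨2 * runL S - 1 + emin S, (hmemM _).2 (Or.inl rfl), by rw [Nat.odd_iff]; omega, ?_⟩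
      intro x hx
      rcases (hmemM x).1 hx with rfl | ⟨hxS, hxs, hxw⟩
      · exact le_refl _
      · have hx0 : x ≠ 0 := fun h => h0 (h ▸ hxS)
        rcases (show x % 2 = 0 ∨ x % 2 = 1 by omega) with he | hodd
        · have := emin_min hEv hxS he
          omega
        · have hxout : x ∈ Outl S := mem_Outl.2 ⟨hxS, hodd, by omega⟩
          have := hwin _ hxout
          omega
    · have h1S : (1 : ℕ) ∈ S := by
        have := runL_mem (S := S) (i := 0) (by omega)
        simpa using this
      refine ⟨1, (hmemM _).2 (Or.inr ⟨h1S, by omega, by omega⟩), by norm_num, ?_⟩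
      intro x hx
      rcases (hmemM x).1 hx with rfl | ⟨hxS, _, _⟩
      · omega
      · have : x ≠ 0 := fun h => h0 (h ▸ hxS)
        omega
  have hMP : invo S ∈ Pdo n := mem_Pdo_of hsum hminM
  refine ⟨hMP, hcard, ?_⟩
  -- now compute invo (invo S)
  have hrunM : runL (invo S) = runL S - 1 := by
    apply runL_eq
    · intro i hi
      have hiS : 2 * i + 1 ∈ S := runL_mem (by omega)
      exact (hmemM _).2 (Or.inr ⟨hiS, by omega, by omega⟩)
    · intro hmem
      rcases (hmemM _).1 hmem with heq | ⟨hxS, hxs, hxw⟩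
      · omega
      · exact hxw (by omega)
  have hnMC : ¬ MC (invo S) := by
    rintro ⟨hEv', ha', hwin'⟩
    rw [hrunM] at ha'
    have ha2 : 2 ≤ runL S := by omega
    obtain ⟨hm1, hm2⟩ := emin_mem hEv'
    rcases (hmemM _).1 hm1 with heq | ⟨hmS, hms, hmw⟩
    · omega
    · have hle : emin S ≤ emin (invo S) := emin_min hEv hmS hm2
      have hge : emin S + 2 ≤ emin (invo S) := by
        rcases Nat.lt_or_ge (emin (invo S)) (emin S + 2) with h | h
        · exfalso; apply hms; omega
        · exact h
      have ho : (2 * runL S - 1 + emin S) ∈ Outl (invo S) := by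
        refine mem_Outl.2 ⟨(hmemM _).2 (Or.inl rfl), by omega, by rw [hrunM]; omega⟩
      have := hwin' _ ho
      rw [hrunM] at this
      omega
  have hoM : (2 * runL S - 1 + emin S) ∈ Outl (invo S) := by
    refine mem_Outl.2 ⟨(hmemM _).2 (Or.inl rfl), by omega, by rw [hrunM]; omega⟩
  have hOutM : (Outl (invo S)).Nonempty := ⟨_, hoM⟩
  have hominM : omin (invo S) = 2 * runL S - 1 + emin S := by
    rw [omin, dif_pos hOutM]
    refine le_antisymm (Finset.min'_le _ _ hoM) (Finset.le_min' _ _ _ ?_)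
    intro y hy
    obtain ⟨hyM, hyp1, hyp2⟩ := mem_Outl.1 hy
    rw [hrunM] at hyp2
    rcases (hmemM _).1 hyM with rfl | ⟨hyS, hys, hyw⟩
    · exact le_refl _
    · have hyOut : y ∈ Outl S := by
        refine mem_Outl.2 ⟨hyS, hyp1, by omega⟩
      have := hwin _ hyOut
      omega
  have hsplitM : invo (invo S) = insert (2 * runL (invo S) + 1)
      (insert (omin (invo S) - (2 * runL (invo S) + 1)) ((invo S).erase (omin (invo S)))) := by
    rw [invo, if_neg hnMC, if_pos hOutM]
  rw [hsplitM, hrunM, hominM]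
  have h2a : 2 * (runL S - 1) + 1 = 2 * runL S - 1 := by omega
  rw [h2a]
  have hrsub : 2 * runL S - 1 + emin S - (2 * runL S - 1) = emin S := by omega
  rw [hrsub]
  have hMe : (invo S).erase (2 * runL S - 1 + emin S)
      = (S.erase (emin S)).erase (2 * runL S - 1) := by
    rw [hMdef]
    exact Finset.erase_insert hwsX
  rw [hMe]
  ext x
  simp only [Finset.mem_insert, Finset.mem_erase]
  constructor
  · rintro (rfl | rfl | ⟨_, _, hxS⟩)
    · exact hwS
    · exact hsS
    · exact hxS
  · intro hxS
    by_cases e1 : x = 2 * runL S - 1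
    · exact Or.inl e1
    · by_cases e2 : x = emin S
      · exact Or.inr (Or.inl e2)
      · exact Or.inr (Or.inr ⟨e1, e2, hxS⟩)

/-! ### The split case -/

theorem split_main {n : ℕ} {S : Finset ℕ} (hS : S ∈ Pdo n) (hnc : ¬ MC S)
    (hOut : (Outl S).Nonempty) :
    invo S ∈ Pdo n ∧ (invo S).card = S.card + 1 ∧ invo (invo S) = S := by
  have h0 : 0 ∉ S := Pdo_zero hS
  obtain ⟨hoS, hoodd, hoge⟩ := omin_mem hOut
  have hone : omin S ≠ 2 * runL S + 1 := fun h => runL_gap S (h ▸ hoS)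
  have ho3 : 2 * runL S + 3 ≤ omin S := by omega
  have hrodd : (omin S - (2 * runL S + 1)) % 2 = 0 := by omega
  have hr2 : 2 ≤ omin S - (2 * runL S + 1) := by omega
  -- the remainder is not in S
  have hrS : omin S - (2 * runL S + 1) ∉ S := by
    intro hmem
    have hEv : (Ev S).Nonempty := ⟨_, mem_Ev.2 ⟨hmem, hrodd⟩⟩
    have hemin : emin S ≤ omin S - (2 * runL S + 1) := emin_min hEv hmem hrodd
    rcases Nat.eq_zero_or_pos (runL S) with ha0 | ha1
    · obtain ⟨m, hmS, hmodd, hmle⟩ := Pdo_min hS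
      have hmout : m ∈ Outl S := mem_Outl.2 ⟨hmS, hmodd, by omega⟩
      have h1 := omin_min hOut hmout
      have h2 := hmle _ hmem
      omega
    · have hnw : ¬ (∀ x ∈ Outl S, 2 * runL S - 1 + emin S < x) := by
        intro hwin
        exact hnc ⟨hEv, ha1, hwin⟩
      push_neg at hnw
      obtain ⟨x, hx, hxle⟩ := hnw
      have h1 := omin_min hOut hx
      omega
  have hgap : 2 * runL S + 1 ∉ S := runL_gap S
  have hne1 : (2 * runL S + 1) ≠ omin S - (2 * runL S + 1) := by omega
  have hTdef : invo S = insert (2 * runL S + 1)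
      (insert (omin S - (2 * runL S + 1)) (S.erase (omin S))) := by
    rw [invo, if_neg hnc, if_pos hOut]
  have hrE : omin S - (2 * runL S + 1) ∉ S.erase (omin S) :=
    fun h => hrS (Finset.mem_of_mem_erase h)
  have hgE : 2 * runL S + 1 ∉ insert (omin S - (2 * runL S + 1)) (S.erase (omin S)) := by
    intro h
    rcases Finset.mem_insert.1 h with h | h
    · exact hne1 h
    · exact hgap (Finset.mem_of_mem_erase h)
  have hmemT : ∀ x, x ∈ invo S ↔
      (x = 2 * runL S + 1 ∨ x = omin S - (2 * runL S + 1) ∨ (x ∈ S ∧ x ≠ omin S)) := by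
    intro x
    rw [hTdef]
    simp only [Finset.mem_insert, Finset.mem_erase]
    tauto
  -- cardinality
  have hcard : (invo S).card = S.card + 1 := by
    have c1 : (S.erase (omin S)).card + 1 = S.card := Finset.card_erase_add_one hoS
    have c2 : (insert (omin S - (2 * runL S + 1)) (S.erase (omin S))).card
        = (S.erase (omin S)).card + 1 := Finset.card_insert_of_notMem hrE
    have c3 : (invo S).card
        = (insert (omin S - (2 * runL S + 1)) (S.erase (omin S))).card + 1 := by
      rw [hTdef]; exact Finset.card_insert_of_notMem hgE
    omega
  -- sum
  have hsum : (invo S).sum id = n := by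
    have e1 : id (omin S) + (S.erase (omin S)).sum id = S.sum id :=
      Finset.add_sum_erase _ id hoS
    have e2 : (insert (omin S - (2 * runL S + 1)) (S.erase (omin S))).sum id
        = id (omin S - (2 * runL S + 1)) + (S.erase (omin S)).sum id :=
      Finset.sum_insert hrE
    have e3 : (invo S).sum id = id (2 * runL S + 1) +
        (insert (omin S - (2 * runL S + 1)) (S.erase (omin S))).sum id := by
      rw [hTdef]; exact Finset.sum_insert hgE
    have e4 := Pdo_sum hS
    simp only [id_eq] at e1 e2 e3 e4 ⊢
    omega
  -- smallest part odd : 1 is always in invo S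
  have h1T : (1 : ℕ) ∈ invo S := by
    rcases Nat.eq_zero_or_pos (runL S) with ha0 | ha1
    · exact (hmemT _).2 (Or.inl (by omega))
    · have h1S : (1 : ℕ) ∈ S := by
        have := runL_mem (S := S) (i := 0) (by omega)
        simpa using this
      exact (hmemT _).2 (Or.inr (Or.inr ⟨h1S, by omega⟩))
  have hminT : ∃ m ∈ invo S, Odd m ∧ ∀ x ∈ invo S, m ≤ x := by
    refine ⟨1, h1T, by norm_num, ?_⟩
    intro x hx
    rcases (hmemT x).1 hx with rfl | h | ⟨hxS, _⟩
    · omega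
    · omega
    · have : x ≠ 0 := fun h => h0 (h ▸ hxS)
      omega
  have hTP : invo S ∈ Pdo n := mem_Pdo_of hsum hminT
  refine ⟨hTP, hcard, ?_⟩
  -- compute invo (invo S) : the run length grows by one
  have hrunT : runL (invo S) = runL S + 1 := by
    apply runL_eq
    · intro i hi
      rcases (show i < runL S ∨ i = runL S by omega) with h | h
      · have hiS : 2 * i + 1 ∈ S := runL_mem h
        exact (hmemT _).2 (Or.inr (Or.inr ⟨hiS, by omega⟩))
      · exact (hmemT _).2 (Or.inl (by omega))
    · intro hmem
      rcases (hmemT _).1 hmem with heq | heq | ⟨hxS, hxo⟩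
      · omega
      · omega
      · have hxout : (2 * (runL S + 1) + 1) ∈ Outl S :=
          mem_Outl.2 ⟨hxS, by omega, by omega⟩
        have := omin_min hOut hxout
        omega
  have hEvT : (Ev (invo S)).Nonempty := by
    exact ⟨omin S - (2 * runL S + 1), mem_Ev.2 ⟨(hmemT _).2 (Or.inr (Or.inl rfl)), hrodd⟩⟩
  have heminT : emin (invo S) = omin S - (2 * runL S + 1) := by
    rw [emin, dif_pos hEvT]
    refine le_antisymm (Finset.min'_le _ _ (mem_Ev.2
      ⟨(hmemT _).2 (Or.inr (Or.inl rfl)), hrodd⟩)) (Finset.le_min' _ _ _ ?_)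
    intro y hy
    obtain ⟨hyT, hye⟩ := mem_Ev.1 hy
    rcases (hmemT _).1 hyT with rfl | heq | ⟨hyS, hyo⟩
    · omega
    · omega
    · have hEv : (Ev S).Nonempty := ⟨_, mem_Ev.2 ⟨hyS, hye⟩⟩
      have hemin : emin S ≤ y := emin_min hEv hyS hye
      rcases Nat.eq_zero_or_pos (runL S) with ha0 | ha1
      · obtain ⟨m, hmS, hmodd, hmle⟩ := Pdo_min hS
        have hmout : m ∈ Outl S := mem_Outl.2 ⟨hmS, hmodd, by omega⟩
        have h1 := omin_min hOut hmout
        have h2 := hmle _ hyS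
        omega
      · have hnw : ¬ (∀ x ∈ Outl S, 2 * runL S - 1 + emin S < x) := by
          intro hwin
          exact hnc ⟨hEv, ha1, hwin⟩
        push_neg at hnw
        obtain ⟨x, hx, hxle⟩ := hnw
        have h1 := omin_min hOut hx
        omega
  have hwinT : ∀ x ∈ Outl (invo S), 2 * runL (invo S) - 1 + emin (invo S) < x := by
    intro x hx
    obtain ⟨hxT, hxp1, hxp2⟩ := mem_Outl.1 hx
    rw [hrunT] at hxp2
    rw [hrunT, heminT]
    rcases (hmemT _).1 hxT with rfl | rfl | ⟨hxS, hxo⟩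
    · omega
    · omega
    · have hxout : x ∈ Outl S := mem_Outl.2 ⟨hxS, hxp1, by omega⟩
      have := omin_min hOut hxout
      omega
  have hmcT : MC (invo S) := ⟨hEvT, by rw [hrunT]; omega, hwinT⟩
  have hmergeT : invo (invo S) = insert (2 * runL (invo S) - 1 + emin (invo S))
      (((invo S).erase (emin (invo S))).erase (2 * runL (invo S) - 1)) := by
    rw [invo, if_pos hmcT]
  rw [hmergeT, hrunT, heminT]
  have h2a : 2 * (runL S + 1) - 1 = 2 * runL S + 1 := by omega
  rw [h2a]
  have hback : 2 * runL S + 1 + (omin S - (2 * runL S + 1)) = omin S := by omega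
  rw [hback]
  have hTe : (invo S).erase (omin S - (2 * runL S + 1))
      = insert (2 * runL S + 1) (S.erase (omin S)) := by
    rw [hTdef]
    ext x
    simp only [Finset.mem_erase, Finset.mem_insert]
    constructor
    · rintro ⟨hne, rfl | rfl | ⟨h1, h2⟩⟩
      · exact Or.inl rfl
      · exact absurd rfl hne
      · exact Or.inr ⟨h1, h2⟩
    · rintro (rfl | ⟨h1, h2⟩)
      · exact ⟨by omega, Or.inl rfl⟩
      · refine ⟨?_, Or.inr (Or.inr ⟨h1, h2⟩)⟩
        intro h
        exact hrS (h ▸ h2)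
  rw [hTe]
  have hgE2 : (2 * runL S + 1) ∉ S.erase (omin S) :=
    fun h => hgap (Finset.mem_of_mem_erase h)
  rw [Finset.erase_insert hgE2]
  exact Finset.insert_erase hoS

/-! ### The fixed points : odd staircases -/

/-- The staircase of odd numbers `1, 3, ..., 2k-1`. -/
noncomputable def stair (k : ℕ) : Finset ℕ := (Finset.range k).image (fun i => 2 * i + 1)

lemma mem_stair {k x : ℕ} : x ∈ stair k ↔ ∃ i, i < k ∧ x = 2 * i + 1 := by
  simp [stair, Finset.mem_image, Finset.mem_range, eq_comm]

lemma stair_card (k : ℕ) : (stair k).card = k := by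
  rw [stair, Finset.card_image_of_injective _ (fun a b h => by omega), Finset.card_range]

lemma stair_sum (k : ℕ) : (stair k).sum id = k * k := by
  rw [stair, Finset.sum_image (fun a _ b _ h => by omega)]
  induction k with
  | zero => simp
  | succ m ih =>
      rw [Finset.sum_range_succ, ih]
      simp only [id_eq]
      ring

lemma runL_stair (k : ℕ) : runL (stair k) = k := by
  apply runL_eq
  · intro i hi
    exact mem_stair.2 ⟨i, hi, rfl⟩
  · intro h
    obtain ⟨i, hik, he⟩ := mem_stair.1 h
    omega

lemma Ev_stair (k : ℕ) : Ev (stair k) = ∅ := by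
  rw [Finset.eq_empty_iff_forall_notMem]
  intro x hx
  obtain ⟨hx1, hx2⟩ := mem_Ev.1 hx
  obtain ⟨i, _, rfl⟩ := mem_stair.1 hx1
  omega

lemma Outl_stair (k : ℕ) : Outl (stair k) = ∅ := by
  rw [Finset.eq_empty_iff_forall_notMem]
  intro x hx
  obtain ⟨hx1, hx2, hx3⟩ := mem_Outl.1 hx
  obtain ⟨i, hik, rfl⟩ := mem_stair.1 hx1
  rw [runL_stair] at hx3
  omega

lemma invo_stair (k : ℕ) : invo (stair k) = stair k := by
  have h1 : ¬ MC (stair k) := by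
    rintro ⟨h, -, -⟩
    rw [Ev_stair] at h
    exact absurd h (by simp)
  have h2 : ¬ (Outl (stair k)).Nonempty := by
    rw [Outl_stair]
    simp
  rw [invo, if_neg h1, if_neg h2]

lemma stair_mem_Pdo {k : ℕ} (hk : 1 ≤ k) : stair k ∈ Pdo (k * k) := by
  apply mem_Pdo_of (stair_sum k)
  refine ⟨1, mem_stair.2 ⟨0, by omega, by omega⟩, by norm_num, ?_⟩
  intro x hx
  obtain ⟨i, _, rfl⟩ := mem_stair.1 hx
  omega

/-- If neither branch applies, `S` is an odd staircase. -/
lemma fix_main {n : ℕ} {S : Finset ℕ} (hS : S ∈ Pdo n) (hnc : ¬ MC S)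
    (hOut : ¬ (Outl S).Nonempty) : S = stair (runL S) ∧ n = runL S * runL S := by
  have h0 : 0 ∉ S := Pdo_zero hS
  have hEv : ¬ (Ev S).Nonempty := by
    intro hEv
    rcases Nat.eq_zero_or_pos (runL S) with ha0 | ha1
    · obtain ⟨m, hmS, hmodd, _⟩ := Pdo_min hS
      exact hOut ⟨m, mem_Outl.2 ⟨hmS, hmodd, by omega⟩⟩
    · refine hnc ⟨hEv, ha1, ?_⟩
      intro x hx
      exact absurd ⟨x, hx⟩ hOut
  have hSeq : S = stair (runL S) := by
    ext x
    rw [mem_stair]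
    constructor
    · intro hxS
      have hxodd : x % 2 = 1 := by
        rcases (show x % 2 = 0 ∨ x % 2 = 1 by omega) with h | h
        · exact absurd ⟨x, mem_Ev.2 ⟨hxS, h⟩⟩ hEv
        · exact h
      have hxlt : x < 2 * runL S := by
        by_contra hge
        exact hOut ⟨x, mem_Outl.2 ⟨hxS, hxodd, by omega⟩⟩
      exact ⟨x / 2, by omega, by omega⟩
    · rintro ⟨i, hik, rfl⟩
      exact runL_mem hik
  refine ⟨hSeq, ?_⟩
  have hs := Pdo_sum hS
  rw [hSeq, stair_sum] at hs
  omega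

/-! ### Putting it together -/

lemma invo_ok {n : ℕ} {S : Finset ℕ} (hS : S ∈ Pdo n)
    (hns : S ≠ stair (runL S) ∨ ¬ IsSquare n) :
    invo S ∈ Pdo n ∧ invo (invo S) = S ∧ invo S ≠ S ∧
      (-1 : ℤ) ^ S.card + (-1 : ℤ) ^ (invo S).card = 0 := by
  have hbr : MC S ∨ ((¬ MC S) ∧ (Outl S).Nonempty) := by
    by_cases h1 : MC S
    · exact Or.inl h1
    · by_cases h2 : (Outl S).Nonempty
      · exact Or.inr ⟨h1, h2⟩
      · exfalso
        obtain ⟨hfix, hsq⟩ := fix_main hS h1 h2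
        rcases hns with hns | hns
        · exact hns hfix
        · exact hns ⟨runL S, hsq⟩
  rcases hbr with hmc | ⟨hnc, hOut⟩
  · obtain ⟨h1, h2, h3⟩ := merge_main hS hmc
    refine ⟨h1, h3, fun he => by rw [he] at h2; omega, ?_⟩
    rw [h2, pow_succ]
    ring
  · obtain ⟨h1, h2, h3⟩ := split_main hS hnc hOut
    refine ⟨h1, h3, fun he => by rw [he] at h2; omega, ?_⟩
    rw [h2, pow_succ]
    ring

theorem main_nonsquare {n : ℕ} (hns : ¬ IsSquare n) :
    ∑ S ∈ Pdo n, (-1 : ℤ) ^ S.card = 0 := by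
  apply Finset.sum_involution (fun S _ => invo S)
  · intro S hS
    exact (invo_ok hS (Or.inr hns)).2.2.2
  · intro S hS _
    exact (invo_ok hS (Or.inr hns)).2.2.1
  · intro S hS
    exact (invo_ok hS (Or.inr hns)).1
  · intro S hS
    exact (invo_ok hS (Or.inr hns)).2.1

theorem main_square {n : ℕ} (hn : 1 ≤ n) {k : ℕ} (hk : n = k * k) :
    ∑ S ∈ Pdo n, (-1 : ℤ) ^ S.card = (-1 : ℤ) ^ k := by
  have hk1 : 1 ≤ k := by
    by_contra h
    have hk0 : k = 0 := by omega
    rw [hk0] at hk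
    simp at hk
    omega
  have hst : stair k ∈ Pdo n := hk ▸ stair_mem_Pdo hk1
  have hmove : ∀ S ∈ (Pdo n).erase (stair k), S ≠ stair (runL S) := by
    intro S hSe
    obtain ⟨hne, hS⟩ := Finset.mem_erase.1 hSe
    intro hfix
    have hsum := Pdo_sum hS
    rw [hfix, stair_sum] at hsum
    have h5 : runL S * runL S = k * k := by omega
    have h6 : runL S = k := by
      have := congrArg Nat.sqrt h5
      simpa [Nat.sqrt_eq] using this
    exact hne (by rw [hfix, h6])
  have hzero : ∑ S ∈ (Pdo n).erase (stair k), (-1 : ℤ) ^ S.card = 0 := by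
    apply Finset.sum_involution (fun S _ => invo S)
    · intro S hSe
      obtain ⟨hne, hS⟩ := Finset.mem_erase.1 hSe
      exact (invo_ok hS (Or.inl (hmove S hSe))).2.2.2
    · intro S hSe _
      obtain ⟨hne, hS⟩ := Finset.mem_erase.1 hSe
      exact (invo_ok hS (Or.inl (hmove S hSe))).2.2.1
    · intro S hSe
      obtain ⟨hne, hS⟩ := Finset.mem_erase.1 hSe
      obtain ⟨h1, h2, h3, _⟩ := invo_ok hS (Or.inl (hmove S hSe))
      refine Finset.mem_erase.2 ⟨?_, h1⟩
      intro he
      apply hne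
      rw [← h2, he, invo_stair]
    · intro S hSe
      obtain ⟨hne, hS⟩ := Finset.mem_erase.1 hSe
      exact (invo_ok hS (Or.inl (hmove S hSe))).2.1
  have hsplit := Finset.add_sum_erase (Pdo n) (fun S => (-1 : ℤ) ^ S.card) hst
  rw [← hsplit, hzero, add_zero]
  simp [stair_card]

end PdoAux

open scoped Classical in
theorem sum_neg_one_pow_Pdo (n : ℕ) (hn : 1 ≤ n) :
    ∑ S ∈ Pdo n, (-1 : ℤ) ^ S.card =
      if IsSquare n then (-1 : ℤ) ^ Nat.sqrt n else 0 := by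
  by_cases hsq : IsSquare n
  · rw [if_pos hsq]
    obtain ⟨r, hr⟩ := hsq
    have hs : Nat.sqrt n = r := by rw [hr, Nat.sqrt_eq]
    rw [hs]
    exact PdoAux.main_square hn hr
  · rw [if_neg hsq]
    exact PdoAux.main_nonsquare hsq
end

section
/- For every positive integer n, let R_e(n) (resp. R_o(n)) be the number of partitions of n into distinct parts with smallest part odd having an even (resp. odd) number of parts. Then R_e(n) - R_o(n) = (-1)^k if n = k^2 for some positive integer k, and 0 otherwise. -/
/-- Auxiliary: every finset of naturals misses some odd number. -/
lemma kk_aux (S : Finset ℕ) : ∃ j, 2 * j + 1 ∉ S := by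
  refine ⟨S.sum id, fun h => ?_⟩
  have := Finset.single_le_sum (f := id) (fun i _ => Nat.zero_le i) h
  simp only [id] at this
  omega

/-- Largest `k` such that the odd staircase `{1,3,...,2k-1}` is contained in `S`. -/
def kk (S : Finset ℕ) : ℕ := Nat.find (kk_aux S)

lemma kk_spec (S : Finset ℕ) : 2 * kk S + 1 ∉ S := Nat.find_spec (kk_aux S)

lemma kk_min (S : Finset ℕ) {i : ℕ} (hi : i < kk S) : 2 * i + 1 ∈ S :=
  not_not.mp (Nat.find_min (kk_aux S) hi)

lemma kk_eq {S : Finset ℕ} {k : ℕ} (h1 : 2 * k + 1 ∉ S)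
    (h2 : ∀ i < k, 2 * i + 1 ∈ S) : kk S = k := by
  refine le_antisymm (Nat.find_le h1) ?_
  by_contra h
  push_neg at h
  exact kk_spec S (h2 _ h)

/-- Odd elements of `S` above the staircase. -/
def osS (S : Finset ℕ) : Finset ℕ := S.filter (fun x => x % 2 = 1 ∧ 2 * kk S < x)

/-- Even elements of `S`. -/
def esS (S : Finset ℕ) : Finset ℕ := S.filter (fun x => x % 2 = 0)

/-- The sign-reversing involution. -/
def iot (S : Finset ℕ) : Finset ℕ :=
  if ho : (osS S).Nonempty then
    if (∀ e ∈ esS S, (osS S).min' ho < e + (2 * kk S + 1)) then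
      insert (2 * kk S + 1)
        (insert ((osS S).min' ho - (2 * kk S + 1)) (S.erase ((osS S).min' ho)))
    else if he : (esS S).Nonempty then
      insert ((esS S).min' he + (2 * kk S - 1))
        ((S.erase ((esS S).min' he)).erase (2 * kk S - 1))
    else S
  else if he : (esS S).Nonempty then
    insert ((esS S).min' he + (2 * kk S - 1))
      ((S.erase ((esS S).min' he)).erase (2 * kk S - 1))
  else S

def Good (n : ℕ) (S : Finset ℕ) : Prop :=
  S.sum id = n ∧ ∃ m ∈ S, Odd m ∧ ∀ x ∈ S, m ≤ x

lemma good_pos {n : ℕ} {S : Finset ℕ} (hS : Good n S) : ∀ x ∈ S, 1 ≤ x := by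
  obtain ⟨-, m, hm, hodd, hmin⟩ := hS
  intro x hx
  have h1 : 1 ≤ m := hodd.pos
  exact le_trans h1 (hmin x hx)

def stair (k : ℕ) : Finset ℕ := (Finset.range k).image (fun i => 2 * i + 1)

lemma mem_stair {k z : ℕ} : z ∈ stair k ↔ ∃ i < k, 2 * i + 1 = z := by
  simp [stair]

lemma sum_stair (k : ℕ) : (stair k).sum id = k * k := by
  have hinj : Function.Injective (fun i => 2 * i + 1) := fun a b h => by simp only [] at h; omega
  rw [stair, Finset.sum_image (fun a _ b _ h => hinj h)]
  induction k with
  | zero => simp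
  | succ m ih => rw [Finset.sum_range_succ, ih]; simp [id]; ring

lemma card_stair (k : ℕ) : (stair k).card = k := by
  have hinj : Function.Injective (fun i => 2 * i + 1) := fun a b h => by simp only [] at h; omega
  rw [stair, Finset.card_image_of_injective _ hinj, Finset.card_range]

lemma kk_stair (k : ℕ) : kk (stair k) = k := by
  refine kk_eq ?_ ?_
  · rw [mem_stair]; rintro ⟨i, hi, h⟩; omega
  · intro i hi; rw [mem_stair]; exact ⟨i, hi, rfl⟩

lemma iot_stair (k : ℕ) : iot (stair k) = stair k := by
  have ho : ¬ (osS (stair k)).Nonempty := by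
    rw [Finset.nonempty_iff_ne_empty, not_not]
    rw [osS, Finset.filter_eq_empty_iff]
    intro x hx
    rw [mem_stair] at hx
    obtain ⟨i, hi, rfl⟩ := hx
    rw [kk_stair]; omega
  have he : ¬ (esS (stair k)).Nonempty := by
    rw [Finset.nonempty_iff_ne_empty, not_not]
    rw [esS, Finset.filter_eq_empty_iff]
    intro x hx
    rw [mem_stair] at hx
    obtain ⟨i, hi, rfl⟩ := hx
    omega
  rw [iot, dif_neg ho, dif_neg he]

/-- If both `osS` and `esS` are empty, `S` is a staircase. -/
lemma stair_of_empty {n : ℕ} {S : Finset ℕ} (hS : Good n S)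
    (ho : ¬ (osS S).Nonempty) (he : ¬ (esS S).Nonempty) :
    S = stair (kk S) ∧ n = kk S * kk S := by
  rw [Finset.nonempty_iff_ne_empty, not_not, osS, Finset.filter_eq_empty_iff] at ho
  rw [Finset.nonempty_iff_ne_empty, not_not, esS, Finset.filter_eq_empty_iff] at he
  have hSeq : S = stair (kk S) := by
    ext z
    rw [mem_stair]
    constructor
    · intro hz
      have h1 := ho hz
      have h2 := he hz
      have h3 : z ≠ 2 * kk S + 1 := fun h => kk_spec S (h ▸ hz)
      push_neg at h1 h2
      refine ⟨z / 2, by omega, by omega⟩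
    · rintro ⟨i, hi, rfl⟩; exact kk_min S hi
  refine ⟨hSeq, ?_⟩
  have := hS.1
  rw [hSeq, sum_stair] at this
  omega

section Main
variable {n : ℕ} {S : Finset ℕ}

lemma lemA (hS : Good n S) (ho : (osS S).Nonempty)
    (hA : ∀ e ∈ esS S, (osS S).min' ho < e + (2 * kk S + 1)) :
    Good n (iot S) ∧ (iot S).card = S.card + 1 ∧ iot (iot S) = S := by
  set k := kk S with hk
  set u := (osS S).min' ho with hu
  set x := u - (2 * k + 1) with hx
  have hknot : 2 * k + 1 ∉ S := kk_spec S
  have huos : u ∈ osS S := Finset.min'_mem _ ho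
  rw [osS, Finset.mem_filter] at huos
  obtain ⟨huS, huodd, hugt⟩ := huos
  have hu3 : 2 * k + 3 ≤ u := by
    have : u ≠ 2 * k + 1 := fun h => hknot (h ▸ huS)
    omega
  have hxe : x % 2 = 0 := by omega
  have hxu : x + (2 * k + 1) = u := by omega
  have hxS : x ∉ S := by
    intro hmem
    have : x ∈ esS S := by rw [esS, Finset.mem_filter]; exact ⟨hmem, hxe⟩
    have := hA x this
    omega
  have hTeq : iot S = insert (2 * k + 1) (insert x (S.erase u)) := by
    rw [iot, dif_pos ho, if_pos hA]
  have hmemT : ∀ z, z ∈ iot S ↔ z = 2 * k + 1 ∨ z = x ∨ (z ≠ u ∧ z ∈ S) := by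
    intro z
    rw [hTeq]
    simp [Finset.mem_insert, Finset.mem_erase]
  -- 1 is in iot S and is its minimum
  have hpos := good_pos hS
  have h1T : 1 ∈ iot S := by
    rw [hmemT]
    rcases Nat.eq_zero_or_pos k with h0 | h1
    · left; omega
    · right; right
      exact ⟨by omega, by simpa using kk_min S (show 0 < k by omega)⟩
  have hminT : ∀ z ∈ iot S, 1 ≤ z := by
    intro z hz
    rw [hmemT] at hz
    rcases hz with h | h | ⟨-, h⟩
    · omega
    · omega
    · exact hpos z h
  -- sum
  have hsum : (iot S).sum id = n := by
    rw [hTeq]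
    have h1 : x ∉ S.erase u := fun h => hxS (Finset.mem_of_mem_erase h)
    have h2 : 2 * k + 1 ∉ insert x (S.erase u) := by
      simp only [Finset.mem_insert, Finset.mem_erase]
      push_neg
      exact ⟨by omega, fun _ => hknot⟩
    rw [Finset.sum_insert h2, Finset.sum_insert h1]
    have h3 := Finset.add_sum_erase S id huS
    have h4 := hS.1
    simp only [id] at h3 h4 ⊢
    omega
  -- card
  have hcard : (iot S).card = S.card + 1 := by
    rw [hTeq]
    have h1 : x ∉ S.erase u := fun h => hxS (Finset.mem_of_mem_erase h)
    have h2 : 2 * k + 1 ∉ insert x (S.erase u) := by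
      simp only [Finset.mem_insert, Finset.mem_erase]
      push_neg
      exact ⟨by omega, fun _ => hknot⟩
    rw [Finset.card_insert_of_notMem h2, Finset.card_insert_of_notMem h1,
      Finset.card_erase_of_mem huS]
    have : 1 ≤ S.card := Finset.card_pos.mpr ⟨u, huS⟩
    omega
  have hGood : Good n (iot S) := by
    exact ⟨hsum, 1, h1T, odd_one, hminT⟩
  refine ⟨hGood, hcard, ?_⟩
  -- kk of the image
  have hkkT : kk (iot S) = k + 1 := by
    refine kk_eq ?_ ?_
    · rw [hmemT]
      push_neg
      refine ⟨by omega, by omega, fun h13 => ?_⟩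
      intro h13S
      have hos : 2 * k + 3 ∈ osS S := by
        rw [osS, Finset.mem_filter]
        exact ⟨h13S, by omega, by omega⟩
      have := Finset.min'_le _ _ hos
      omega
    · intro i hi
      rw [hmemT]
      rcases Nat.lt_succ_iff_lt_or_eq.mp hi with h | h
      · right; right
        exact ⟨by omega, kk_min S h⟩
      · left; omega
  -- evens of the image
  have hesT : esS (iot S) = insert x (esS S) := by
    ext z
    rw [esS, Finset.mem_filter, hmemT, Finset.mem_insert, esS, Finset.mem_filter]
    constructor
    · rintro ⟨h | h | ⟨hne, hz⟩, hev⟩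
      · omega
      · left; exact h
      · right; exact ⟨hz, hev⟩
    · rintro (rfl | ⟨hz, hev⟩)
      · exact ⟨Or.inr (Or.inl rfl), hxe⟩
      · exact ⟨Or.inr (Or.inr ⟨by omega, hz⟩), hev⟩
  have hesTne : (esS (iot S)).Nonempty := by
    rw [hesT]; exact ⟨x, Finset.mem_insert_self _ _⟩
  have hminES : (esS (iot S)).min' hesTne = x := by
    refine le_antisymm (Finset.min'_le _ _ (by rw [hesT]; exact Finset.mem_insert_self _ _)) ?_
    refine Finset.le_min' _ _ _ ?_
    intro b hb
    rw [hesT, Finset.mem_insert] at hb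
    rcases hb with rfl | hb
    · exact le_rfl
    · have := hA b hb; omega
  -- odds of the image
  have hosT : osS (iot S) = (osS S).erase u := by
    ext z
    rw [osS, Finset.mem_filter, hmemT, hkkT, Finset.mem_erase, osS, Finset.mem_filter]
    constructor
    · rintro ⟨h | h | ⟨hne, hz⟩, hodd, hgt⟩
      · omega
      · omega
      · exact ⟨hne, hz, hodd, by omega⟩
    · rintro ⟨hne, hz, hodd, hgt⟩
      have hz1 : z ≠ 2 * k + 1 := fun h => hknot (h ▸ hz)
      exact ⟨Or.inr (Or.inr ⟨hne, hz⟩), hodd, by omega⟩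
  -- final: iot (iot S) = S
  have hfinal : iot (iot S) = insert ((esS (iot S)).min' hesTne + (2 * kk (iot S) - 1))
      (((iot S).erase ((esS (iot S)).min' hesTne)).erase (2 * kk (iot S) - 1)) := by
    by_cases ho' : (osS (iot S)).Nonempty
    · have hng : ¬ (∀ e ∈ esS (iot S), (osS (iot S)).min' ho' < e + (2 * kk (iot S) + 1)) := by
        intro hall
        have humem : (osS (iot S)).min' ho' ∈ (osS S).erase u := by
          rw [← hosT]; exact Finset.min'_mem _ ho'
        rw [Finset.mem_erase] at humem
        obtain ⟨hne, humem⟩ := humem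
        have hle : u ≤ (osS (iot S)).min' ho' := Finset.min'_le _ _ humem
        have hodd' : (osS (iot S)).min' ho' % 2 = 1 := by
          rw [osS, Finset.mem_filter] at humem
          exact humem.2.1
        have hxin : x ∈ esS (iot S) := by
          rw [hesT]; exact Finset.mem_insert_self _ _
        have := hall x hxin
        rw [hkkT] at this
        omega
      rw [iot, dif_pos ho', if_neg hng, dif_pos hesTne]
    · rw [iot, dif_neg ho', dif_pos hesTne]
  rw [hfinal, hminES, hkkT]
  have h2k : 2 * (k + 1) - 1 = 2 * k + 1 := by omega
  rw [h2k]
  ext z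
  simp only [Finset.mem_insert, Finset.mem_erase]
  rw [hmemT z]
  constructor
  · rintro (rfl | ⟨hz1, hz2, h | h | ⟨hne, hz⟩⟩)
    · rw [hxu]; exact huS
    · omega
    · omega
    · exact hz
  · intro hz
    by_cases hzu : z = u
    · left; omega
    · right
      refine ⟨fun h => hknot (h ▸ hz), fun h => hxS (h ▸ hz), Or.inr (Or.inr ⟨hzu, hz⟩)⟩

lemma lemB (hS : Good n S) (he : (esS S).Nonempty)
    (hg : ∀ (ho : (osS S).Nonempty),
      ∃ e₀ ∈ esS S, e₀ + (2 * kk S + 1) ≤ (osS S).min' ho) :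
    Good n (iot S) ∧ S.card = (iot S).card + 1 ∧ iot (iot S) = S := by
  set k := kk S with hk
  set e := (esS S).min' he with heq
  have hknot : 2 * k + 1 ∉ S := kk_spec S
  have hees : e ∈ esS S := Finset.min'_mem _ he
  rw [esS, Finset.mem_filter] at hees
  obtain ⟨heS, heev⟩ := hees
  have hpos := good_pos hS
  have he2 : 2 ≤ e := by have := hpos e heS; omega
  -- k ≥ 1
  have hk1 : 1 ≤ k := by
    by_contra hk0
    obtain ⟨-, m, hmS, hmodd, hmmin⟩ := hS
    have hmodd' : m % 2 = 1 := Nat.odd_iff.mp hmodd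
    have hmos : m ∈ osS S := by
      rw [osS, Finset.mem_filter]
      exact ⟨hmS, hmodd', by omega⟩
    obtain ⟨e₀, he₀, hle₀⟩ := hg ⟨m, hmos⟩
    rw [esS, Finset.mem_filter] at he₀
    have h1 := hmmin e₀ he₀.1
    have h2 : (osS S).min' ⟨m, hmos⟩ ≤ m := Finset.min'_le _ _ hmos
    omega
  set y := e + (2 * k - 1) with hy
  have hyodd : y % 2 = 1 := by omega
  have hyk : 2 * k + 1 ≤ y := by omega
  have hstairS : 2 * k - 1 ∈ S := by
    have := kk_min S (show k - 1 < k by omega)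
    have h : 2 * (k - 1) + 1 = 2 * k - 1 := by omega
    rwa [h] at this
  -- y ∉ S and y below all of osS
  have hymin : ∀ v ∈ osS S, y + 2 ≤ v := by
    intro v hv
    obtain ⟨e₀, he₀, hle₀⟩ := hg ⟨v, hv⟩
    have h1 : e ≤ e₀ := Finset.min'_le _ _ he₀
    have h2 : (osS S).min' ⟨v, hv⟩ ≤ v := Finset.min'_le _ _ hv
    omega
  have hyS : y ∉ S := by
    intro hyS
    have h1 : y ≠ 2 * k + 1 := fun h => hknot (h ▸ hyS)
    have hyos : y ∈ osS S := by
      rw [osS, Finset.mem_filter]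
      exact ⟨hyS, hyodd, by omega⟩
    have := hymin y hyos
    omega
  -- the guard fails at S
  have hTeq : iot S = insert (e + (2 * k - 1)) ((S.erase e).erase (2 * k - 1)) := by
    by_cases ho : (osS S).Nonempty
    · have hng : ¬ (∀ e' ∈ esS S, (osS S).min' ho < e' + (2 * k + 1)) := by
        intro hall
        obtain ⟨e₀, he₀, hle₀⟩ := hg ho
        have := hall e₀ he₀
        omega
      rw [iot, dif_pos ho, if_neg hng, dif_pos he]
    · rw [iot, dif_neg ho, dif_pos he]
  have hmemT : ∀ z, z ∈ iot S ↔ z = y ∨ (z ≠ 2 * k - 1 ∧ z ≠ e ∧ z ∈ S) := by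
    intro z
    rw [hTeq]
    simp only [Finset.mem_insert, Finset.mem_erase, hy]
  have hestair : e ≠ 2 * k - 1 := by omega
  -- sum
  have hsum : (iot S).sum id = n := by
    rw [hTeq]
    have h1 : 2 * k - 1 ∈ S.erase e := Finset.mem_erase.mpr ⟨by omega, hstairS⟩
    have h2 : y ∉ (S.erase e).erase (2 * k - 1) := by
      intro h
      exact hyS (Finset.mem_of_mem_erase (Finset.mem_of_mem_erase h))
    rw [← hy, Finset.sum_insert h2]
    have h3 := Finset.add_sum_erase (S.erase e) id h1
    have h4 := Finset.add_sum_erase S id heS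
    have h5 := hS.1
    simp only [id] at h3 h4 h5 ⊢
    omega
  -- card
  have hcard : S.card = (iot S).card + 1 := by
    rw [hTeq]
    have h1 : 2 * k - 1 ∈ S.erase e := Finset.mem_erase.mpr ⟨by omega, hstairS⟩
    have h2 : y ∉ (S.erase e).erase (2 * k - 1) := by
      intro h
      exact hyS (Finset.mem_of_mem_erase (Finset.mem_of_mem_erase h))
    rw [← hy, Finset.card_insert_of_notMem h2, Finset.card_erase_of_mem h1,
      Finset.card_erase_of_mem heS]
    have h3 : 1 ≤ (S.erase e).card := Finset.card_pos.mpr ⟨2 * k - 1, h1⟩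
    have h4 : (S.erase e).card = S.card - 1 := Finset.card_erase_of_mem heS
    omega
  -- Goodness : minimum odd element
  have hGood : Good n (iot S) := by
    refine ⟨hsum, ?_⟩
    rcases Nat.lt_or_ge k 2 with hk2 | hk2
    · -- k = 1 : minimum is y = e + 1
      have hkeq : k = 1 := by omega
      refine ⟨y, (hmemT y).mpr (Or.inl rfl), Nat.odd_iff.mpr hyodd, ?_⟩
      intro z hz
      rw [hmemT] at hz
      rcases hz with rfl | ⟨hz1, hz2, hz3⟩
      · exact le_rfl
      · rcases Nat.even_or_odd z with hev | hodd
        · have hzes : z ∈ esS S := by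
            rw [esS, Finset.mem_filter]
            exact ⟨hz3, Nat.even_iff.mp hev⟩
          have := Finset.min'_le _ _ hzes
          have hzev := Nat.even_iff.mp hev
          omega
        · have hzodd := Nat.odd_iff.mp hodd
          have hz4 : z ≠ 2 * k + 1 := fun h => hknot (h ▸ hz3)
          have hzos : z ∈ osS S := by
            rw [osS, Finset.mem_filter]
            refine ⟨hz3, hzodd, ?_⟩
            have := hpos z hz3
            omega
          have := hymin z hzos
          omega
    · -- k ≥ 2 : minimum is 1
      have h1S : 1 ∈ S := by simpa using kk_min S (show 0 < k by omega)
      refine ⟨1, (hmemT 1).mpr (Or.inr ⟨by omega, by omega, h1S⟩), odd_one, ?_⟩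
      intro z hz
      rw [hmemT] at hz
      rcases hz with rfl | ⟨-, -, hz3⟩
      · omega
      · exact hpos z hz3
  refine ⟨hGood, hcard, ?_⟩
  -- kk of the image
  have hkkT : kk (iot S) = k - 1 := by
    refine kk_eq ?_ ?_
    · rw [hmemT]
      push_neg
      have h : 2 * (k - 1) + 1 = 2 * k - 1 := by omega
      rw [h]
      exact ⟨by omega, fun hc => absurd rfl hc⟩
    · intro i hi
      rw [hmemT]
      right
      refine ⟨by omega, by omega, kk_min S (by omega)⟩
  have h2kT : 2 * kk (iot S) + 1 = 2 * k - 1 := by rw [hkkT]; omega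
  -- odds of the image
  have hosT : osS (iot S) = insert y (osS S) := by
    ext z
    rw [osS, Finset.mem_filter, hmemT, hkkT, Finset.mem_insert, osS, Finset.mem_filter]
    constructor
    · rintro ⟨rfl | ⟨hz1, hz2, hz3⟩, hodd, hgt⟩
      · left; rfl
      · right
        have hz4 : z ≠ 2 * k + 1 := fun h => hknot (h ▸ hz3)
        exact ⟨hz3, hodd, by omega⟩
    · rintro (rfl | hz)
      · exact ⟨Or.inl rfl, hyodd, by omega⟩
      · obtain ⟨hz3, hodd, hgt⟩ := hz
        exact ⟨Or.inr ⟨by omega, by omega, hz3⟩, hodd, by omega⟩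
  have hosTne : (osS (iot S)).Nonempty := by
    rw [hosT]; exact ⟨y, Finset.mem_insert_self _ _⟩
  have hminOS : (osS (iot S)).min' hosTne = y := by
    refine le_antisymm (Finset.min'_le _ _ (by rw [hosT]; exact Finset.mem_insert_self _ _)) ?_
    refine Finset.le_min' _ _ _ ?_
    intro b hb
    rw [hosT, Finset.mem_insert] at hb
    rcases hb with rfl | hb
    · exact le_rfl
    · have := hymin b hb; omega
  -- evens of the image
  have hesT : esS (iot S) = (esS S).erase e := by
    ext z
    rw [esS, Finset.mem_filter, hmemT, Finset.mem_erase, esS, Finset.mem_filter]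
    constructor
    · rintro ⟨rfl | ⟨hz1, hz2, hz3⟩, hev⟩
      · omega
      · exact ⟨hz2, hz3, hev⟩
    · rintro ⟨hne, hz, hev⟩
      exact ⟨Or.inr ⟨by omega, hne, hz⟩, hev⟩
  -- the A-guard holds at iot S
  have hguard : ∀ e' ∈ esS (iot S), (osS (iot S)).min' hosTne < e' + (2 * kk (iot S) + 1) := by
    intro e' he'
    rw [hesT, Finset.mem_erase] at he'
    obtain ⟨hne, he'⟩ := he'
    have h1 : e ≤ e' := Finset.min'_le _ _ he'
    rw [hminOS, h2kT]
    omega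
  have hfinal : iot (iot S) = insert (2 * kk (iot S) + 1)
      (insert ((osS (iot S)).min' hosTne - (2 * kk (iot S) + 1))
        ((iot S).erase ((osS (iot S)).min' hosTne))) := by
    rw [iot, dif_pos hosTne, if_pos hguard]
  rw [hfinal, hminOS, h2kT]
  have hye : y - (2 * k - 1) = e := by omega
  rw [hye]
  ext z
  simp only [Finset.mem_insert, Finset.mem_erase]
  rw [hmemT z]
  constructor
  · rintro (rfl | rfl | ⟨hzy, rfl | ⟨-, -, hz⟩⟩)
    · exact hstairS
    · exact heS
    · exact absurd rfl hzy
    · exact hz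
  · intro hz
    by_cases hz1 : z = 2 * k - 1
    · left; exact hz1
    · by_cases hz2 : z = e
      · right; left; exact hz2
      · right; right
        exact ⟨fun h => hyS (h ▸ hz), Or.inr ⟨hz1, hz2, hz⟩⟩


/-- Main involution package. -/
lemma key (hS : Good n S) (hne : S ≠ stair (kk S)) :
    Good n (iot S) ∧ iot (iot S) = S ∧
      ((-1 : ℤ) ^ (iot S).card = -(-1 : ℤ) ^ S.card) := by
  by_cases ho : (osS S).Nonempty
  · by_cases hA : ∀ e ∈ esS S, (osS S).min' ho < e + (2 * kk S + 1)
    · obtain ⟨h1, h2, h3⟩ := lemA hS ho hA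
      refine ⟨h1, h3, ?_⟩
      rw [h2, pow_succ]; ring
    · push_neg at hA
      obtain ⟨e, hee, hge⟩ := hA
      have he : (esS S).Nonempty := ⟨e, hee⟩
      obtain ⟨h1, h2, h3⟩ := lemB hS he (fun ho' => ⟨e, hee, by omega⟩)
      refine ⟨h1, h3, ?_⟩
      rw [h2, pow_succ]; ring
  · by_cases he : (esS S).Nonempty
    · obtain ⟨h1, h2, h3⟩ := lemB hS he (fun ho' => absurd ho' ho)
      refine ⟨h1, h3, ?_⟩
      rw [h2, pow_succ]; ring
    · exact absurd (stair_of_empty hS ho he).1 hne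

end Main

lemma mem_Pdo {n : ℕ} {S : Finset ℕ} : S ∈ Pdo n ↔ Good n S := by
  rw [Pdo, Finset.mem_filter, Finset.mem_powerset]
  constructor
  · rintro ⟨-, h⟩; exact h
  · intro h
    refine ⟨fun x hx => ?_, h⟩
    have := Finset.single_le_sum (f := id) (fun i _ => Nat.zero_le i) hx
    rw [h.1] at this
    simp only [id] at this
    rw [Finset.mem_range]
    omega

lemma iot_ne {n : ℕ} {S : Finset ℕ} (hS : Good n S) (hne : S ≠ stair (kk S)) :
    iot S ≠ S := by
  obtain ⟨h1, h2, h3⟩ := key hS hne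
  intro h
  rw [h] at h3
  rcases Nat.even_or_odd S.card with hev | hod
  · rw [hev.neg_one_pow] at h3; norm_num at h3
  · rw [hod.neg_one_pow] at h3; norm_num at h3

lemma not_stair_kk {n j : ℕ} {S : Finset ℕ} (hS : Good n S) (hj : n = j * j)
    (hne : S ≠ stair j) : S ≠ stair (kk S) := by
  intro h
  have h1 : n = kk S * kk S := by
    have := hS.1
    rw [h, sum_stair] at this
    omega
  have : kk S = j := by
    have h2 : kk S * kk S = j * j := by rw [← h1, hj]
    exact (Nat.mul_self_inj).mp h2
  rw [this] at h
  exact hne h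

open scoped Classical in
theorem Re_sub_Ro (n : ℕ) (hn : 1 ≤ n) :
    (((Pdo n).filter (fun S => Even S.card)).card : ℤ) -
      (((Pdo n).filter (fun S => Odd S.card)).card : ℤ) =
      if IsSquare n then (-1 : ℤ) ^ Nat.sqrt n else 0 := by
  classical
  have hcount : (((Pdo n).filter (fun S => Even S.card)).card : ℤ) -
      (((Pdo n).filter (fun S => Odd S.card)).card : ℤ)
      = ∑ S ∈ Pdo n, (-1 : ℤ) ^ S.card := by
    rw [← Finset.sum_filter_add_sum_filter_not (Pdo n) (fun S => Even S.card)
      (fun S => (-1 : ℤ) ^ S.card)]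
    have h1 : ∑ S ∈ (Pdo n).filter (fun S => Even S.card), (-1 : ℤ) ^ S.card
        = (((Pdo n).filter (fun S => Even S.card)).card : ℤ) := by
      rw [Finset.sum_congr rfl (fun S hS => ((Finset.mem_filter.mp hS).2).neg_one_pow)]
      simp
    have h2 : ∑ S ∈ (Pdo n).filter (fun S => ¬ Even S.card), (-1 : ℤ) ^ S.card
        = -(((Pdo n).filter (fun S => Odd S.card)).card : ℤ) := by
      have hfe : (Pdo n).filter (fun S => ¬ Even S.card)
          = (Pdo n).filter (fun S => Odd S.card) := by
        apply Finset.filter_congr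
        intro S _
        exact Nat.not_even_iff_odd
      rw [hfe, Finset.sum_congr rfl (fun S hS => ((Finset.mem_filter.mp hS).2).neg_one_pow)]
      simp
    rw [h1, h2]
    ring
  rw [hcount]
  by_cases hsq : IsSquare n
  · rw [if_pos hsq]
    obtain ⟨j, hj⟩ := hsq
    have hj1 : 1 ≤ j := by
      rcases Nat.eq_zero_or_pos j with h | h
      · rw [h] at hj; simp at hj; omega
      · exact h
    have hstG : Good n (stair j) := by
      refine ⟨by rw [sum_stair]; omega, 1, ?_, odd_one, ?_⟩
      · rw [mem_stair]; exact ⟨0, by omega, by omega⟩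
      · intro x hx
        rw [mem_stair] at hx
        obtain ⟨i, hi, rfl⟩ := hx
        omega
    have hst : stair j ∈ Pdo n := mem_Pdo.mpr hstG
    have hsplit := Finset.sum_erase_add (Pdo n) (fun S => (-1 : ℤ) ^ S.card) hst
    have hzero : ∑ S ∈ (Pdo n).erase (stair j), (-1 : ℤ) ^ S.card = 0 := by
      refine Finset.sum_involution (fun S _ => iot S) ?_ ?_ ?_ ?_
      · intro S hS
        obtain ⟨hne, hmem⟩ := Finset.mem_erase.mp hS
        obtain ⟨h1, h2, h3⟩ := key (mem_Pdo.mp hmem) (not_stair_kk (mem_Pdo.mp hmem) hj hne)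
        rw [h3]; ring
      · intro S hS _
        obtain ⟨hne, hmem⟩ := Finset.mem_erase.mp hS
        exact iot_ne (mem_Pdo.mp hmem) (not_stair_kk (mem_Pdo.mp hmem) hj hne)
      · intro S hS
        obtain ⟨hne, hmem⟩ := Finset.mem_erase.mp hS
        have hG := mem_Pdo.mp hmem
        obtain ⟨h1, h2, h3⟩ := key hG (not_stair_kk hG hj hne)
        rw [Finset.mem_erase]
        refine ⟨?_, mem_Pdo.mpr h1⟩
        intro hbad
        have hbad' : iot S = stair j := hbad
        apply hne
        rw [← h2, hbad', iot_stair]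
      · intro S hS
        obtain ⟨hne, hmem⟩ := Finset.mem_erase.mp hS
        have hG := mem_Pdo.mp hmem
        exact (key hG (not_stair_kk hG hj hne)).2.1
    rw [hzero, zero_add] at hsplit
    rw [← hsplit]
    show (-1 : ℤ) ^ (stair j).card = _
    rw [card_stair]
    have : Nat.sqrt n = j := by rw [hj, Nat.sqrt_eq]
    rw [this]
  · rw [if_neg hsq]
    refine Finset.sum_involution (fun S _ => iot S) ?_ ?_ ?_ ?_
    · intro S hS
      have hG := mem_Pdo.mp hS
      have hne : S ≠ stair (kk S) := by
        intro h
        refine hsq ⟨kk S, ?_⟩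
        have := hG.1
        rw [h, sum_stair] at this
        omega
      obtain ⟨h1, h2, h3⟩ := key hG hne
      rw [h3]; ring
    · intro S hS _
      have hG := mem_Pdo.mp hS
      have hne : S ≠ stair (kk S) := by
        intro h
        refine hsq ⟨kk S, ?_⟩
        have := hG.1
        rw [h, sum_stair] at this
        omega
      exact iot_ne hG hne
    · intro S hS
      have hG := mem_Pdo.mp hS
      have hne : S ≠ stair (kk S) := by
        intro h
        refine hsq ⟨kk S, ?_⟩
        have := hG.1
        rw [h, sum_stair] at this
        omega
      exact mem_Pdo.mpr (key hG hne).1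
    · intro S hS
      have hG := mem_Pdo.mp hS
      have hne : S ≠ stair (kk S) := by
        intro h
        refine hsq ⟨kk S, ?_⟩
        have := hG.1
        rw [h, sum_stair] at this
        omega
      exact (key hG hne).2.1
end

section
/- The number of partitions of n into distinct parts with smallest part odd is odd if and only if n is a perfect square. -/
open Finset

namespace PdoAux

open scoped Classical

/-- min exists and is odd -/
def MinOdd (S : Finset ℕ) : Prop := ∃ m ∈ S, Odd m ∧ ∀ x ∈ S, m ≤ x
/-- min exists and is even -/
def MinEven (S : Finset ℕ) : Prop := ∃ m ∈ S, ¬ Odd m ∧ ∀ x ∈ S, m ≤ x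

noncomputable def NN (n r : ℕ) : Finset (Finset ℕ) :=
  (Finset.range (n + 1)).powerset.filter
    (fun S => S.sum id = n ∧ (S.filter (fun x => Odd x)).card = r ∧ MinOdd S)

noncomputable def UU (n r : ℕ) : Finset (Finset ℕ) :=
  (Finset.range (n + 1)).powerset.filter
    (fun S => S.sum id = n ∧ (S.filter (fun x => Odd x)).card = r ∧ MinEven S ∧ 0 ∉ S)

noncomputable def PP (n r : ℕ) : Finset (Finset ℕ) :=
  (Finset.range (n + 1)).powerset.filter
    (fun S => S.sum id = n ∧ (S.filter (fun x => Odd x)).card = r ∧ 0 ∉ S)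

lemma subset_range_of_sum {S : Finset ℕ} {n : ℕ} (h : S.sum id = n) :
    S ⊆ Finset.range (n + 1) := by
  intro x hx
  have : (id x : ℕ) ≤ S.sum id := Finset.single_le_sum (fun i _ => Nat.zero_le _) hx
  simp only [id] at this
  have h' : ∑ x ∈ S, x = n := h
  exact Finset.mem_range.mpr (by omega)

lemma mem_NN {S : Finset ℕ} {n r : ℕ} :
    S ∈ NN n r ↔ S.sum id = n ∧ (S.filter (fun x => Odd x)).card = r ∧ MinOdd S := by
  constructor
  · intro h; exact (Finset.mem_filter.mp h).2
  · intro h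
    exact Finset.mem_filter.mpr ⟨Finset.mem_powerset.mpr (subset_range_of_sum h.1), h⟩

lemma mem_UU {S : Finset ℕ} {n r : ℕ} :
    S ∈ UU n r ↔ S.sum id = n ∧ (S.filter (fun x => Odd x)).card = r ∧ MinEven S ∧ 0 ∉ S := by
  constructor
  · intro h; exact (Finset.mem_filter.mp h).2
  · intro h
    exact Finset.mem_filter.mpr ⟨Finset.mem_powerset.mpr (subset_range_of_sum h.1), h⟩

lemma mem_PP {S : Finset ℕ} {n r : ℕ} :
    S ∈ PP n r ↔ S.sum id = n ∧ (S.filter (fun x => Odd x)).card = r ∧ 0 ∉ S := by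
  constructor
  · intro h; exact (Finset.mem_filter.mp h).2
  · intro h
    exact Finset.mem_filter.mpr ⟨Finset.mem_powerset.mpr (subset_range_of_sum h.1), h⟩

lemma MinOdd.zero_not_mem {S : Finset ℕ} (h : MinOdd S) : 0 ∉ S := by
  rintro h0
  obtain ⟨m, hm, hodd, hmin⟩ := h
  have := hmin 0 h0
  interval_cases m
  · exact (Nat.not_odd_iff_even.mpr (by simp)) hodd

lemma MinOdd.one_le {S : Finset ℕ} (h : MinOdd S) : ∀ x ∈ S, 1 ≤ x := by
  intro x hx
  have h0 := h.zero_not_mem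
  rcases Nat.eq_zero_or_pos x with h' | h'
  · exact absurd (h' ▸ hx) h0
  · exact h'


noncomputable def sd (U : Finset ℕ) : Finset ℕ :=
  ((U.filter (fun x => Odd x)).image (fun x => x - 2)) ∪ U.filter (fun x => ¬ Odd x)

noncomputable def su (V : Finset ℕ) : Finset ℕ :=
  ((V.filter (fun x => Odd x)).image (fun x => x + 2)) ∪ V.filter (fun x => ¬ Odd x)

lemma odd_sub_two {x : ℕ} (h : Odd x) (h3 : 3 ≤ x) : Odd (x - 2) := by
  rw [Nat.odd_iff] at *; omega

lemma odd_add_two {x : ℕ} (h : Odd x) : Odd (x + 2) := by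
  rw [Nat.odd_iff] at *; omega

section SD
variable {U : Finset ℕ} (H3 : ∀ x ∈ U, Odd x → 3 ≤ x)
include H3

lemma sd_injOn : Set.InjOn (fun x => x - 2) (U.filter (fun x => Odd x)) := by
  intro x hx y hy hxy
  simp only [coe_filter, Set.mem_setOf_eq] at hx hy
  have hx3 := H3 x hx.1 hx.2
  have hy3 := H3 y hy.1 hy.2
  have hxy' : x - 2 = y - 2 := hxy
  omega

lemma sd_filter_odd :
    (sd U).filter (fun x => Odd x) = (U.filter (fun x => Odd x)).image (fun x => x - 2) := by
  unfold sd
  rw [filter_union]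
  have h1 : ((U.filter (fun x => Odd x)).image (fun x => x - 2)).filter (fun x => Odd x)
      = (U.filter (fun x => Odd x)).image (fun x => x - 2) := by
    apply filter_true_of_mem
    intro x hx
    obtain ⟨y, hy, rfl⟩ := mem_image.mp hx
    have hy' := mem_filter.mp hy
    exact odd_sub_two hy'.2 (H3 y hy'.1 hy'.2)
  have h2 : (U.filter (fun x => ¬ Odd x)).filter (fun x => Odd x) = ∅ := by
    rw [filter_filter]
    apply filter_false_of_mem
    tauto
  rw [h1, h2, union_empty]

lemma sd_filter_even :
    (sd U).filter (fun x => ¬ Odd x) = U.filter (fun x => ¬ Odd x) := by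
  unfold sd
  rw [filter_union]
  have h1 : ((U.filter (fun x => Odd x)).image (fun x => x - 2)).filter (fun x => ¬ Odd x) = ∅ := by
    apply filter_false_of_mem
    intro x hx
    obtain ⟨y, hy, rfl⟩ := mem_image.mp hx
    have hy' := mem_filter.mp hy
    simpa using odd_sub_two hy'.2 (H3 y hy'.1 hy'.2)
  have h2 : (U.filter (fun x => ¬ Odd x)).filter (fun x => ¬ Odd x)
      = U.filter (fun x => ¬ Odd x) := by
    rw [filter_filter]
    apply filter_congr; tauto
  rw [h1, h2, empty_union]

lemma sd_disj : Disjoint ((U.filter (fun x => Odd x)).image (fun x => x - 2))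
    (U.filter (fun x => ¬ Odd x)) := by
  rw [disjoint_left]
  intro x hx hx'
  obtain ⟨y, hy, rfl⟩ := mem_image.mp hx
  have hy' := mem_filter.mp hy
  exact (mem_filter.mp hx').2 (odd_sub_two hy'.2 (H3 y hy'.1 hy'.2))

lemma sd_card_odd : ((sd U).filter (fun x => Odd x)).card = (U.filter (fun x => Odd x)).card := by
  rw [sd_filter_odd H3]
  exact card_image_of_injOn (sd_injOn H3)

lemma sd_sum : (sd U).sum id + 2 * (U.filter (fun x => Odd x)).card = U.sum id := by
  unfold sd
  rw [sum_union (sd_disj H3), sum_image (fun x hx y hy h => sd_injOn H3 (by simpa using hx) (by simpa using hy) (by simpa using h))]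
  have key : (U.filter (fun x => Odd x)).sum (fun x => x - 2) + 2 * (U.filter (fun x => Odd x)).card
      = (U.filter (fun x => Odd x)).sum id := by
    have e1 : (U.filter (fun x => Odd x)).sum (fun x => x - 2)
        + (U.filter (fun x => Odd x)).sum (fun _ => 2)
        = (U.filter (fun x => Odd x)).sum (fun x => x - 2 + 2) := Finset.sum_add_distrib.symm
    have e2 : (U.filter (fun x => Odd x)).sum (fun _ => 2)
        = 2 * (U.filter (fun x => Odd x)).card := by
      rw [Finset.sum_const, smul_eq_mul, mul_comm]
    have e3 : (U.filter (fun x => Odd x)).sum (fun x => x - 2 + 2)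
        = (U.filter (fun x => Odd x)).sum id := by
      apply Finset.sum_congr rfl
      intro x hx
      have hx' := mem_filter.mp hx
      have := H3 x hx'.1 hx'.2
      simp only [id]
      omega
    omega
  have hsum : U.sum id = (U.filter (fun x => Odd x)).sum id
      + (U.filter (fun x => ¬ Odd x)).sum id := (sum_filter_add_sum_filter_not U _ id).symm
  simp only [id_eq] at key hsum ⊢
  omega

lemma su_sd : su (sd U) = U := by
  unfold su
  rw [sd_filter_odd H3, sd_filter_even H3, image_image]
  have h1 : ((U.filter (fun x => Odd x)).image ((fun x => x + 2) ∘ (fun x => x - 2)))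
      = U.filter (fun x => Odd x) := by
    rw [show ((fun x : ℕ => x + 2) ∘ (fun x => x - 2)) = fun x => x - 2 + 2 from rfl]
    have : ∀ x ∈ U.filter (fun x => Odd x), x - 2 + 2 = x := by
      intro x hx
      have hx' := mem_filter.mp hx
      have := H3 x hx'.1 hx'.2
      omega
    calc (U.filter (fun x => Odd x)).image (fun x => x - 2 + 2)
        = (U.filter (fun x => Odd x)).image id := image_congr (fun x hx => this x hx)
      _ = U.filter (fun x => Odd x) := image_id
  rw [h1, filter_union_filter_not_eq]

end SD

section SU
variable {V : Finset ℕ}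

lemma su_injOn : Set.InjOn (fun x : ℕ => x + 2) (V.filter (fun x => Odd x)) := by
  intro x _ y _ hxy
  have hxy' : x + 2 = y + 2 := hxy
  omega

lemma su_filter_odd :
    (su V).filter (fun x => Odd x) = (V.filter (fun x => Odd x)).image (fun x => x + 2) := by
  unfold su
  rw [filter_union]
  have h1 : ((V.filter (fun x => Odd x)).image (fun x => x + 2)).filter (fun x => Odd x)
      = (V.filter (fun x => Odd x)).image (fun x => x + 2) := by
    apply filter_true_of_mem
    intro x hx
    obtain ⟨y, hy, rfl⟩ := mem_image.mp hx
    exact odd_add_two (mem_filter.mp hy).2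
  have h2 : (V.filter (fun x => ¬ Odd x)).filter (fun x => Odd x) = ∅ := by
    rw [filter_filter]; apply filter_false_of_mem; tauto
  rw [h1, h2, union_empty]

lemma su_filter_even :
    (su V).filter (fun x => ¬ Odd x) = V.filter (fun x => ¬ Odd x) := by
  unfold su
  rw [filter_union]
  have h1 : ((V.filter (fun x => Odd x)).image (fun x => x + 2)).filter (fun x => ¬ Odd x) = ∅ := by
    apply filter_false_of_mem
    intro x hx
    obtain ⟨y, hy, rfl⟩ := mem_image.mp hx
    simpa using odd_add_two (mem_filter.mp hy).2
  have h2 : (V.filter (fun x => ¬ Odd x)).filter (fun x => ¬ Odd x)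
      = V.filter (fun x => ¬ Odd x) := by
    rw [filter_filter]; apply filter_congr; tauto
  rw [h1, h2, empty_union]

lemma su_disj : Disjoint ((V.filter (fun x => Odd x)).image (fun x => x + 2))
    (V.filter (fun x => ¬ Odd x)) := by
  rw [disjoint_left]
  intro x hx hx'
  obtain ⟨y, hy, rfl⟩ := mem_image.mp hx
  exact (mem_filter.mp hx').2 (odd_add_two (mem_filter.mp hy).2)

lemma su_card_odd : ((su V).filter (fun x => Odd x)).card = (V.filter (fun x => Odd x)).card := by
  rw [su_filter_odd]
  exact card_image_of_injOn su_injOn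

lemma su_sum : (su V).sum id = V.sum id + 2 * (V.filter (fun x => Odd x)).card := by
  unfold su
  rw [sum_union su_disj, sum_image (fun x hx y hy h => su_injOn (by simpa using hx) (by simpa using hy) (by simpa using h))]
  have e1 : (V.filter (fun x => Odd x)).sum (fun x => id (x + 2))
      = (V.filter (fun x => Odd x)).sum id + 2 * (V.filter (fun x => Odd x)).card := by
    simp only [id_eq]
    rw [Finset.sum_add_distrib, Finset.sum_const, smul_eq_mul]
    simp [mul_comm, Finset.sum_congr]
  have hsum : V.sum id = (V.filter (fun x => Odd x)).sum id
      + (V.filter (fun x => ¬ Odd x)).sum id := (sum_filter_add_sum_filter_not V _ id).symm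
  simp only [id_eq] at *
  omega

lemma su_three : ∀ x ∈ su V, Odd x → 3 ≤ x := by
  intro x hx hodd
  unfold su at hx
  rcases mem_union.mp hx with h | h
  · obtain ⟨y, hy, rfl⟩ := mem_image.mp h
    have : Odd y := (mem_filter.mp hy).2
    rw [Nat.odd_iff] at this; omega
  · exact absurd hodd (mem_filter.mp h).2

lemma sd_su : sd (su V) = V := by
  unfold sd
  rw [su_filter_odd, su_filter_even, image_image]
  have h1 : ((V.filter (fun x => Odd x)).image ((fun x => x - 2) ∘ (fun x => x + 2)))
      = V.filter (fun x => Odd x) := by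
    rw [show ((fun x : ℕ => x - 2) ∘ (fun x => x + 2)) = fun x => x + 2 - 2 from rfl]
    calc (V.filter (fun x => Odd x)).image (fun x => x + 2 - 2)
        = (V.filter (fun x => Odd x)).image id := image_congr (fun x _ => by simp)
      _ = V.filter (fun x => Odd x) := image_id
  rw [h1, filter_union_filter_not_eq]

lemma su_pos {x : ℕ} (h0 : 0 ∉ V) (hx : x ∈ su V) : 1 ≤ x := by
  unfold su at hx
  rcases mem_union.mp hx with h | h
  · obtain ⟨y, hy, rfl⟩ := mem_image.mp h; omega
  · have := (mem_filter.mp h).1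
    rcases Nat.eq_zero_or_pos x with h' | h'
    · exact absurd (h' ▸ this) h0
    · exact h'

lemma sd_pos {U : Finset ℕ} (H3 : ∀ x ∈ U, Odd x → 3 ≤ x) (h0 : 0 ∉ U) :
    ∀ x ∈ sd U, 1 ≤ x := by
  intro x hx
  unfold sd at hx
  rcases mem_union.mp hx with h | h
  · obtain ⟨y, hy, rfl⟩ := mem_image.mp h
    have hy' := mem_filter.mp hy
    have := H3 y hy'.1 hy'.2
    omega
  · have := (mem_filter.mp h).1
    rcases Nat.eq_zero_or_pos x with h' | h'
    · exact absurd (h' ▸ this) h0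
    · exact h'

lemma mem_sd_iff {U : Finset ℕ} {x : ℕ} :
    x ∈ sd U ↔ (∃ y ∈ U, Odd y ∧ x = y - 2) ∨ (x ∈ U ∧ ¬ Odd x) := by
  unfold sd
  simp only [mem_union, mem_image, mem_filter]
  constructor
  · rintro (⟨y, ⟨hy, hyo⟩, rfl⟩ | ⟨h1, h2⟩)
    · exact Or.inl ⟨y, hy, hyo, rfl⟩
    · exact Or.inr ⟨h1, h2⟩
  · rintro (⟨y, hy, hyo, rfl⟩ | ⟨h1, h2⟩)
    · exact Or.inl ⟨y, ⟨hy, hyo⟩, rfl⟩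
    · exact Or.inr ⟨h1, h2⟩

lemma mem_su_iff {V : Finset ℕ} {x : ℕ} :
    x ∈ su V ↔ (∃ y ∈ V, Odd y ∧ x = y + 2) ∨ (x ∈ V ∧ ¬ Odd x) := by
  unfold su
  simp only [mem_union, mem_image, mem_filter]
  constructor
  · rintro (⟨y, ⟨hy, hyo⟩, rfl⟩ | ⟨h1, h2⟩)
    · exact Or.inl ⟨y, hy, hyo, rfl⟩
    · exact Or.inr ⟨h1, h2⟩
  · rintro (⟨y, hy, hyo, rfl⟩ | ⟨h1, h2⟩)
    · exact Or.inl ⟨y, ⟨hy, hyo⟩, rfl⟩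
    · exact Or.inr ⟨h1, h2⟩

end SU


lemma nonempty_of_minOdd {S : Finset ℕ} (h : MinOdd S) : S.Nonempty := by
  obtain ⟨m, hm, _⟩ := h; exact ⟨m, hm⟩

lemma nonempty_of_minEven {S : Finset ℕ} (h : MinEven S) : S.Nonempty := by
  obtain ⟨m, hm, _⟩ := h; exact ⟨m, hm⟩

lemma minOdd_min' {S : Finset ℕ} (h : MinOdd S) (hne : S.Nonempty) :
    Odd (S.min' hne) ∧ ∀ x ∈ S, S.min' hne ≤ x := by
  obtain ⟨m, hm, hodd, hle⟩ := h
  have : m = S.min' hne := le_antisymm (le_min' _ _ _ hle) (min'_le _ _ hm)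
  exact this ▸ ⟨hodd, hle⟩

lemma minEven_min' {S : Finset ℕ} (h : MinEven S) (hne : S.Nonempty) :
    ¬ Odd (S.min' hne) ∧ ∀ x ∈ S, S.min' hne ≤ x := by
  obtain ⟨m, hm, hodd, hle⟩ := h
  have : m = S.min' hne := le_antisymm (le_min' _ _ _ hle) (min'_le _ _ hm)
  exact this ▸ ⟨hodd, hle⟩

lemma min'_insert_eq {a : ℕ} {s : Finset ℕ} (h : ∀ x ∈ s, a ≤ x)
    (H : (insert a s).Nonempty) :
    (insert a s).min' H = a := by
  apply le_antisymm (min'_le _ _ (mem_insert_self a s))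
  apply le_min'
  intro y hy
  rcases mem_insert.mp hy with rfl | hy'
  · exact le_refl _
  · exact h y hy'

/-- Bijection A : members of `NN n (r+1)` containing `1` correspond to `PP (n-(2r+1)) r`. -/
lemma bijA (n r : ℕ) (hn : 2 * r + 1 ≤ n) :
    ((NN n (r + 1)).filter (fun S => 1 ∈ S)).card = (PP (n - (2 * r + 1)) r).card := by
  apply Finset.card_bij' (fun S _ => sd (S.erase 1)) (fun T _ => insert 1 (su T))
  · -- forward membership
    intro S hS
    obtain ⟨hS', h1S⟩ := mem_filter.mp hS
    obtain ⟨hsum, hcard, hmin⟩ := mem_NN.mp hS'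
    have h0 : 0 ∉ S := hmin.zero_not_mem
    set U := S.erase 1 with hU
    have H3 : ∀ x ∈ U, Odd x → 3 ≤ x := by
      intro x hx hodd
      have hxS := mem_of_mem_erase hx
      have hx1 : x ≠ 1 := ne_of_mem_erase hx
      have : 1 ≤ x := hmin.one_le x hxS
      rw [Nat.odd_iff] at hodd; omega
    have hsum' : ∑ x ∈ S, x = n := hsum
    have hUsum : U.sum id + 1 = n := by
      have := Finset.sum_erase_add S id h1S
      simp only [id_eq] at this ⊢
      rw [hU]
      omega
    have hUodd : (U.filter (fun x => Odd x)).card = r := by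
      have : U.filter (fun x => Odd x) = (S.filter (fun x => Odd x)).erase 1 := by
        rw [hU, Finset.filter_erase]
      rw [this, card_erase_of_mem (mem_filter.mpr ⟨h1S, odd_one⟩), hcard]
      omega
    have h0U : 0 ∉ U := fun h => h0 (mem_of_mem_erase h)
    rw [mem_PP]
    refine ⟨?_, ?_, ?_⟩
    · have := sd_sum H3
      simp only [id_eq] at this hUsum ⊢
      omega
    · rw [sd_card_odd H3, hUodd]
    · intro hmem
      have := sd_pos H3 h0U 0 hmem
      omega
  · -- backward membership
    intro T hT
    obtain ⟨hsum, hcard, h0T⟩ := mem_PP.mp hT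
    have h1su : (1 : ℕ) ∉ su T := by
      intro h
      rcases mem_su_iff.mp h with ⟨y, _, _, h'⟩ | ⟨h', hne⟩
      · omega
      · exact hne odd_one
    apply mem_filter.mpr
    constructor
    · rw [mem_NN]
      refine ⟨?_, ?_, ?_⟩
      · rw [Finset.sum_insert h1su]
        have := su_sum (V := T)
        simp only [id_eq] at this hsum ⊢
        omega
      · rw [Finset.filter_insert]
        rw [if_pos odd_one]
        rw [card_insert_of_notMem (fun h => h1su (mem_filter.mp h).1)]
        rw [su_card_odd, hcard]
      · refine ⟨1, mem_insert_self 1 _, odd_one, ?_⟩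
        intro x hx
        rcases mem_insert.mp hx with rfl | hx'
        · exact le_refl 1
        · exact su_pos h0T hx'
    · exact mem_insert_self 1 _
  · -- left inverse
    intro S hS
    obtain ⟨hS', h1S⟩ := mem_filter.mp hS
    obtain ⟨hsum, hcard, hmin⟩ := mem_NN.mp hS'
    have H3 : ∀ x ∈ S.erase 1, Odd x → 3 ≤ x := by
      intro x hx hodd
      have hxS := mem_of_mem_erase hx
      have hx1 : x ≠ 1 := ne_of_mem_erase hx
      have : 1 ≤ x := hmin.one_le x hxS
      rw [Nat.odd_iff] at hodd; omega
    rw [su_sd H3, insert_erase h1S]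
  · -- right inverse
    intro T hT
    obtain ⟨hsum, hcard, h0T⟩ := mem_PP.mp hT
    have h1su : (1 : ℕ) ∉ su T := by
      intro h
      rcases mem_su_iff.mp h with ⟨y, _, _, h'⟩ | ⟨h', hne⟩
      · omega
      · exact hne odd_one
    rw [erase_insert h1su, sd_su]


lemma NN_nonempty {n r : ℕ} {S : Finset ℕ} (h : S ∈ NN n r) : S.Nonempty :=
  nonempty_of_minOdd (mem_NN.mp h).2.2

lemma UU_nonempty {n r : ℕ} {S : Finset ℕ} (h : S ∈ UU n r) : S.Nonempty :=
  nonempty_of_minEven (mem_UU.mp h).2.2.1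

/-- Bijection B, forward membership. -/
lemma bijB_fwd (n r : ℕ) :
    ∀ S (hS : S ∈ (NN n (r + 1)).filter (fun S => 1 ∉ S)),
      insert (S.min' (NN_nonempty (mem_filter.mp hS).1) - 1)
        (sd (S.erase (S.min' (NN_nonempty (mem_filter.mp hS).1)))) ∈ UU (n - (2 * r + 1)) r := by
  intro S hS
  obtain ⟨hS', h1S⟩ := mem_filter.mp hS
  obtain ⟨hsum, hcard, hmin⟩ := mem_NN.mp hS'
  set hne := NN_nonempty (mem_filter.mp hS).1 with hhne
  set m₁ := S.min' hne with hm₁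
  obtain ⟨hm₁odd, hm₁le⟩ := minOdd_min' hmin hne
  have hm₁mem : m₁ ∈ S := S.min'_mem hne
  have hm₁o : m₁ % 2 = 1 := Nat.odd_iff.mp hm₁odd
  have hm₁3 : 3 ≤ m₁ := by
    have : m₁ ≠ 1 := fun h => h1S (h ▸ hm₁mem)
    omega
  set U := S.erase m₁ with hU
  have hgt : ∀ x ∈ U, m₁ + 1 ≤ x := by
    intro x hx
    have := hm₁le x (mem_of_mem_erase hx)
    have := ne_of_mem_erase hx
    omega
  have H3 : ∀ x ∈ U, Odd x → 3 ≤ x := fun x hx _ => le_trans (by omega) (hgt x hx)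
  have hge : ∀ x ∈ sd U, m₁ ≤ x := by
    intro x hx
    rcases mem_sd_iff.mp hx with ⟨y, hy, hyo, rfl⟩ | ⟨hxU, _⟩
    · have := hgt y hy
      have := Nat.odd_iff.mp hyo
      omega
    · exact le_trans (by omega) (hgt x hxU)
  have hnotmem : m₁ - 1 ∉ sd U := fun h => by have := hge _ h; omega
  have hm1e : ¬ Odd (m₁ - 1) := by rw [Nat.odd_iff]; omega
  have hUsum : U.sum id + m₁ = n := by
    have := Finset.sum_erase_add S id hm₁mem
    have hsum' : ∑ x ∈ S, x = n := hsum
    simp only [id_eq] at this ⊢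
    rw [hU]
    omega
  have hUodd : (U.filter (fun x => Odd x)).card = r := by
    rw [hU, Finset.filter_erase,
      card_erase_of_mem (mem_filter.mpr ⟨hm₁mem, hm₁odd⟩), hcard]
    omega
  rw [mem_UU]
  refine ⟨?_, ?_, ?_, ?_⟩
  · rw [Finset.sum_insert hnotmem]
    have := sd_sum H3
    simp only [id_eq] at this hUsum ⊢
    omega
  · rw [Finset.filter_insert, if_neg hm1e, sd_card_odd H3, hUodd]
  · refine ⟨m₁ - 1, mem_insert_self _ _, hm1e, ?_⟩
    intro x hx
    rcases mem_insert.mp hx with rfl | hx'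
    · exact le_refl _
    · exact le_trans (by omega) (hge x hx')
  · intro h
    rcases mem_insert.mp h with h' | h'
    · omega
    · have := hge _ h'; omega

/-- Bijection B, backward membership. -/
lemma bijB_bwd (n r : ℕ) (hn : 2 * r + 1 ≤ n) :
    ∀ T (hT : T ∈ UU (n - (2 * r + 1)) r),
      insert (T.min' (UU_nonempty hT) + 1)
        (su (T.erase (T.min' (UU_nonempty hT)))) ∈ (NN n (r + 1)).filter (fun S => 1 ∉ S) := by
  intro T hT
  obtain ⟨hsum, hcard, hminE, h0T⟩ := mem_UU.mp hT
  set hne := UU_nonempty hT with hhne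
  set m₀ := T.min' hne with hm₀
  obtain ⟨hm₀ev, hm₀le⟩ := minEven_min' hminE hne
  have hm₀mem : m₀ ∈ T := T.min'_mem hne
  have hm₀e : m₀ % 2 = 0 := by
    have := (Nat.odd_iff).not.mp hm₀ev
    omega
  have hm₀2 : 2 ≤ m₀ := by
    have : m₀ ≠ 0 := fun h => h0T (h ▸ hm₀mem)
    omega
  set V := T.erase m₀ with hV
  have hgt : ∀ x ∈ V, m₀ + 1 ≤ x := by
    intro x hx
    have := hm₀le x (mem_of_mem_erase hx)
    have := ne_of_mem_erase hx
    omega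
  have hge : ∀ x ∈ su V, m₀ + 2 ≤ x := by
    intro x hx
    rcases mem_su_iff.mp hx with ⟨y, hy, hyo, rfl⟩ | ⟨hxV, hxe⟩
    · have := hgt y hy; omega
    · have := hgt x hxV
      have := (Nat.odd_iff).not.mp hxe
      omega
  have hnotmem : m₀ + 1 ∉ su V := fun h => by have := hge _ h; omega
  have hm0o : Odd (m₀ + 1) := by rw [Nat.odd_iff]; omega
  have hVsum : V.sum id + m₀ = n - (2 * r + 1) := by
    have := Finset.sum_erase_add T id hm₀mem
    have hsum' : ∑ x ∈ T, x = n - (2 * r + 1) := hsum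
    simp only [id_eq] at this ⊢
    rw [hV]
    omega
  have hVodd : (V.filter (fun x => Odd x)).card = r := by
    rw [hV, Finset.filter_erase, erase_eq_of_notMem
      (fun h => hm₀ev (mem_filter.mp h).2), hcard]
  apply mem_filter.mpr
  constructor
  · rw [mem_NN]
    refine ⟨?_, ?_, ?_⟩
    · rw [Finset.sum_insert hnotmem]
      have := su_sum (V := V)
      simp only [id_eq] at this hVsum ⊢
      omega
    · rw [Finset.filter_insert, if_pos hm0o,
        card_insert_of_notMem (fun h => hnotmem (mem_filter.mp h).1),
        su_card_odd, hVodd]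
    · refine ⟨m₀ + 1, mem_insert_self _ _, hm0o, ?_⟩
      intro x hx
      rcases mem_insert.mp hx with rfl | hx'
      · exact le_refl _
      · exact le_trans (by omega) (hge x hx')
  · intro h
    rcases mem_insert.mp h with h' | h'
    · omega
    · have := hge _ h'; omega

/-- Bijection B, left inverse (generic in the nonemptiness proofs). -/
lemma bijB_linv (n r : ℕ) :
    ∀ S (hS : S ∈ (NN n (r + 1)).filter (fun S => 1 ∉ S))
      (hne : S.Nonempty)
      (H : (insert (S.min' hne - 1) (sd (S.erase (S.min' hne)))).Nonempty),
      insert ((insert (S.min' hne - 1) (sd (S.erase (S.min' hne)))).min' H + 1)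
        (su ((insert (S.min' hne - 1) (sd (S.erase (S.min' hne)))).erase
          ((insert (S.min' hne - 1) (sd (S.erase (S.min' hne)))).min' H))) = S := by
  intro S hS hne H
  obtain ⟨hS', h1S⟩ := mem_filter.mp hS
  obtain ⟨hsum, hcard, hmin⟩ := mem_NN.mp hS'
  set m₁ := S.min' hne with hm₁
  obtain ⟨hm₁odd, hm₁le⟩ := minOdd_min' hmin hne
  have hm₁mem : m₁ ∈ S := S.min'_mem hne
  have hm₁o : m₁ % 2 = 1 := Nat.odd_iff.mp hm₁odd
  have hm₁3 : 3 ≤ m₁ := by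
    have : m₁ ≠ 1 := fun h => h1S (h ▸ hm₁mem)
    omega
  set U := S.erase m₁ with hU
  have hgt : ∀ x ∈ U, m₁ + 1 ≤ x := by
    intro x hx
    have := hm₁le x (mem_of_mem_erase hx)
    have := ne_of_mem_erase hx
    omega
  have H3 : ∀ x ∈ U, Odd x → 3 ≤ x := fun x hx _ => le_trans (by omega) (hgt x hx)
  have hge : ∀ x ∈ sd U, m₁ ≤ x := by
    intro x hx
    rcases mem_sd_iff.mp hx with ⟨y, hy, hyo, rfl⟩ | ⟨hxU, _⟩
    · have := hgt y hy
      have := Nat.odd_iff.mp hyo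
      omega
    · exact le_trans (by omega) (hgt x hxU)
  have hnotmem : m₁ - 1 ∉ sd U := fun h => by have := hge _ h; omega
  rw [min'_insert_eq (fun x hx => le_trans (by omega) (hge x hx)) _,
    erase_insert hnotmem, su_sd H3]
  have h11 : m₁ - 1 + 1 = m₁ := by omega
  rw [h11, hU, insert_erase hm₁mem]

/-- Bijection B, right inverse (generic in the nonemptiness proofs). -/
lemma bijB_rinv (n r : ℕ) :
    ∀ T (hT : T ∈ UU (n - (2 * r + 1)) r)
      (hne : T.Nonempty)
      (H : (insert (T.min' hne + 1) (su (T.erase (T.min' hne)))).Nonempty),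
      insert ((insert (T.min' hne + 1) (su (T.erase (T.min' hne)))).min' H - 1)
        (sd ((insert (T.min' hne + 1) (su (T.erase (T.min' hne)))).erase
          ((insert (T.min' hne + 1) (su (T.erase (T.min' hne)))).min' H))) = T := by
  intro T hT hne H
  obtain ⟨hsum, hcard, hminE, h0T⟩ := mem_UU.mp hT
  set m₀ := T.min' hne with hm₀
  obtain ⟨hm₀ev, hm₀le⟩ := minEven_min' hminE hne
  have hm₀mem : m₀ ∈ T := T.min'_mem hne
  have hm₀e : m₀ % 2 = 0 := by
    have := (Nat.odd_iff).not.mp hm₀ev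
    omega
  have hm₀2 : 2 ≤ m₀ := by
    have : m₀ ≠ 0 := fun h => h0T (h ▸ hm₀mem)
    omega
  set V := T.erase m₀ with hV
  have hgt : ∀ x ∈ V, m₀ + 1 ≤ x := by
    intro x hx
    have := hm₀le x (mem_of_mem_erase hx)
    have := ne_of_mem_erase hx
    omega
  have hge : ∀ x ∈ su V, m₀ + 2 ≤ x := by
    intro x hx
    rcases mem_su_iff.mp hx with ⟨y, hy, hyo, rfl⟩ | ⟨hxV, hxe⟩
    · have := hgt y hy; omega
    · have := hgt x hxV
      have := (Nat.odd_iff).not.mp hxe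
      omega
  have hnotmem : m₀ + 1 ∉ su V := fun h => by have := hge _ h; omega
  rw [min'_insert_eq (fun x hx => le_trans (by omega) (hge x hx)) _,
    erase_insert hnotmem, sd_su]
  have h11 : m₀ + 1 - 1 = m₀ := by omega
  rw [h11, hV, insert_erase hm₀mem]

/-- Bijection B : members of `NN n (r+1)` not containing `1` correspond to
`UU (n-(2r+1)) r`. -/
lemma bijB (n r : ℕ) (hn : 2 * r + 1 ≤ n) :
    ((NN n (r + 1)).filter (fun S => 1 ∉ S)).card = (UU (n - (2 * r + 1)) r).card := by
  refine Finset.card_bij'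
    (fun S hS => insert (S.min' (NN_nonempty (mem_filter.mp hS).1) - 1)
      (sd (S.erase (S.min' (NN_nonempty (mem_filter.mp hS).1)))))
    (fun T hT => insert (T.min' (UU_nonempty hT) + 1)
      (su (T.erase (T.min' (UU_nonempty hT)))))
    (bijB_fwd n r) (bijB_bwd n r hn) ?_ ?_
  · intro S hS
    exact bijB_linv n r S hS _ _
  · intro T hT
    exact bijB_rinv n r T hT _ _


lemma minOdd_iff {S : Finset ℕ} (hne : S.Nonempty) : MinOdd S ↔ Odd (S.min' hne) := by
  constructor
  · intro h; exact (minOdd_min' h hne).1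
  · intro h
    exact ⟨S.min' hne, S.min'_mem hne, h, fun x hx => min'_le _ _ hx⟩

lemma minEven_iff {S : Finset ℕ} (hne : S.Nonempty) : MinEven S ↔ ¬ Odd (S.min' hne) := by
  constructor
  · intro h; exact (minEven_min' h hne).1
  · intro h
    exact ⟨S.min' hne, S.min'_mem hne, h, fun x hx => min'_le _ _ hx⟩

lemma nonempty_of_oddcard {S : Finset ℕ} {k : ℕ} (hk : 1 ≤ k)
    (h : (S.filter (fun x => Odd x)).card = k) : S.Nonempty := by
  have : (S.filter (fun x => Odd x)).Nonempty := by
    apply card_pos.mp; omega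
  obtain ⟨x, hx⟩ := this
  exact ⟨x, (mem_filter.mp hx).1⟩

/-- split of `PP` into `NN` and `UU` for positive odd-part count -/
lemma PP_split (m k : ℕ) (hk : 1 ≤ k) :
    (PP m k).card = (NN m k).card + (UU m k).card := by
  have h1 : NN m k = (PP m k).filter (fun S => MinOdd S) := by
    ext S
    simp only [mem_NN, mem_filter, mem_PP]
    constructor
    · intro ⟨h1, h2, h3⟩
      exact ⟨⟨h1, h2, h3.zero_not_mem⟩, h3⟩
    · intro ⟨⟨h1, h2, _⟩, h4⟩
      exact ⟨h1, h2, h4⟩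
  have h2 : UU m k = (PP m k).filter (fun S => ¬ MinOdd S) := by
    ext S
    simp only [mem_UU, mem_filter, mem_PP]
    constructor
    · intro ⟨h1, h2, h3, h4⟩
      refine ⟨⟨h1, h2, h4⟩, ?_⟩
      have hne := nonempty_of_minEven h3
      rw [minOdd_iff hne]
      exact (minEven_iff hne).mp h3
    · intro ⟨⟨h1, h2, h3⟩, h4⟩
      have hne := nonempty_of_oddcard hk h2
      rw [minOdd_iff hne] at h4
      exact ⟨h1, h2, (minEven_iff hne).mpr h4, h3⟩
  rw [h1, h2]
  exact (Finset.card_filter_add_card_filter_not _).symm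

lemma PP_zero_split (m : ℕ) :
    (PP m 0).card = (UU m 0).card + (if m = 0 then 1 else 0) := by
  have h2 : UU m 0 = (PP m 0).filter (fun S => S ≠ ∅) := by
    ext S
    simp only [mem_UU, mem_filter, mem_PP]
    constructor
    · intro ⟨h1, h2, h3, h4⟩
      refine ⟨⟨h1, h2, h4⟩, ?_⟩
      obtain ⟨x, hx, _⟩ := h3
      exact fun he => by simp [he] at hx
    · intro ⟨⟨h1, h2, h3⟩, h4⟩
      have hne : S.Nonempty := nonempty_iff_ne_empty.mpr h4
      refine ⟨h1, h2, ?_, h3⟩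
      rw [minEven_iff hne]
      intro hodd
      have : S.min' hne ∈ S.filter (fun x => Odd x) :=
        mem_filter.mpr ⟨S.min'_mem hne, hodd⟩
      rw [card_eq_zero] at h2
      simp [h2] at this
  have h3 : ((PP m 0).filter (fun S => S = ∅)).card = if m = 0 then 1 else 0 := by
    rw [Finset.filter_eq' (PP m 0) (∅ : Finset ℕ)]
    by_cases hm : m = 0
    · subst hm
      rw [if_pos (by rw [mem_PP]; simp), card_singleton, if_pos rfl]
    · rw [if_neg (fun hc => hm (by simpa using (mem_PP.mp hc).1.symm)), card_empty, if_neg hm]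
  have := Finset.card_filter_add_card_filter_not
    (s := PP m 0) (p := fun S => S = ∅)
  rw [h2]
  have hswap : (filter (fun S => ¬ S = ∅) (PP m 0)).card
      = (filter (fun S => S ≠ ∅) (PP m 0)).card := rfl
  omega

lemma NN_zero_card (m : ℕ) : (NN m 0).card = 0 := by
  rw [card_eq_zero]
  rw [eq_empty_iff_forall_notMem]
  intro S hS
  obtain ⟨_, h2, h3⟩ := mem_NN.mp hS
  obtain ⟨x, hx, hodd, _⟩ := h3
  have : x ∈ S.filter (fun x => Odd x) := mem_filter.mpr ⟨hx, hodd⟩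
  rw [card_eq_zero] at h2
  simp [h2] at this

lemma card_filter_odd_range (m : ℕ) :
    ((range m).filter (fun x => Odd x)).card = m / 2 := by
  induction m with
  | zero => simp
  | succ m ih =>
    rw [range_add_one, filter_insert]
    by_cases h : Odd m
    · rw [if_pos h, card_insert_of_notMem (fun hc => by simp at hc)]
      rw [Nat.odd_iff] at h
      omega
    · rw [if_neg h]
      rw [Nat.odd_iff] at h
      omega

lemma NN_bound {n r : ℕ} {S : Finset ℕ} (h : S ∈ NN n (r + 1)) : 2 * r + 1 ≤ n := by
  have hsub : S ⊆ range (n + 1) := mem_powerset.mp (mem_filter.mp h).1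
  obtain ⟨_, h2, _⟩ := mem_NN.mp h
  have hsub2 : S.filter (fun x => Odd x) ⊆ (range (n + 1)).filter (fun x => Odd x) :=
    filter_subset_filter _ hsub
  have := card_le_card hsub2
  rw [h2, card_filter_odd_range] at this
  omega

/-- The key induction : the fibre `NN n r` has odd cardinality iff `n = r²`. -/
lemma NN_odd_iff : ∀ (r n : ℕ), Odd (NN n r).card ↔ (1 ≤ r ∧ n = r * r) := by
  intro r
  induction r with
  | zero =>
    intro n
    rw [NN_zero_card]
    simp
  | succ r ih =>
    intro n
    by_cases hn : 2 * r + 1 ≤ n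
    · have hsplit : ((NN n (r + 1)).filter (fun S => 1 ∈ S)).card
          + ((NN n (r + 1)).filter (fun S => ¬ 1 ∈ S)).card = (NN n (r + 1)).card :=
        Finset.card_filter_add_card_filter_not _
      have hA := bijA n r hn
      have hB := bijB n r hn
      have hBB : ((NN n (r + 1)).filter (fun S => ¬ 1 ∈ S)).card
          = (UU (n - (2 * r + 1)) r).card := hB
      rcases Nat.eq_zero_or_pos r with rfl | hr
      · -- r = 0
        have hP := PP_zero_split (n - (2 * 0 + 1))
        rw [Nat.odd_iff]
        rcases em (n - (2 * 0 + 1) = 0) with hz | hz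
        · rw [if_pos hz] at hP
          constructor
          · intro _
            exact ⟨by omega, by omega⟩
          · intro _
            omega
        · rw [if_neg hz] at hP
          constructor
          · intro hodd
            exfalso; omega
          · intro ⟨_, hsq⟩
            exfalso
            have hsq' : n = 1 := by simpa using hsq
            omega
      · -- r ≥ 1
        have hP := PP_split (n - (2 * r + 1)) r hr
        have hih := ih (n - (2 * r + 1))
        have expand : (r + 1) * (r + 1) = r * r + (2 * r + 1) := by ring
        rw [Nat.odd_iff] at *
        constructor
        · intro hodd
          have hx : (NN (n - (2 * r + 1)) r).card % 2 = 1 := by omega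
          have hy := hih.mp hx
          refine ⟨by omega, ?_⟩
          rw [expand]
          omega
        · intro ⟨_, hsq⟩
          rw [expand] at hsq
          have := hih.mpr ⟨hr, by omega⟩
          omega
    · -- n too small : fibre is empty
      have : (NN n (r + 1)).card = 0 := by
        rw [card_eq_zero, eq_empty_iff_forall_notMem]
        intro S hS
        exact hn (NN_bound hS)
      rw [this]
      constructor
      · intro h; exact absurd h (by simp)
      · intro ⟨_, hsq⟩
        exfalso
        apply hn
        nlinarith


lemma Pdo_fiber (n r : ℕ) :
    (Pdo n).filter (fun S => (S.filter (fun x => Odd x)).card = r) = NN n r := by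
  ext S
  simp only [Pdo, NN, mem_filter, mem_powerset]
  simp only [MinOdd]
  tauto

lemma card_le_sum_of_one_le {S : Finset ℕ} (h : ∀ x ∈ S, 1 ≤ x) : S.card ≤ S.sum id := by
  calc S.card = ∑ _x ∈ S, 1 := by simp
  _ ≤ S.sum id := Finset.sum_le_sum h

lemma Pdo_card_eq (n : ℕ) :
    (Pdo n).card = ∑ r ∈ range (n + 1), (NN n r).card := by
  rw [Finset.card_eq_sum_card_fiberwise
    (f := fun S => (S.filter (fun x => Odd x)).card) (t := range (n + 1)) ?_]
  · exact Finset.sum_congr rfl (fun r _ => by rw [Pdo_fiber])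
  · intro S hS
    show (S.filter (fun x => Odd x)).card ∈ range (n + 1)
    obtain ⟨hpow, hsum, hmin⟩ := mem_filter.mp hS
    have h1 : ∀ x ∈ S, 1 ≤ x := MinOdd.one_le hmin
    have h2 : S.card ≤ n := by
      have := card_le_sum_of_one_le h1
      omega
    have h3 : (S.filter (fun x => Odd x)).card ≤ S.card := card_le_card (filter_subset _ _)
    exact mem_range.mpr (by omega)

lemma even_sum_of_even {s : Finset ℕ} {f : ℕ → ℕ} (h : ∀ i ∈ s, Even (f i)) :
    Even (∑ i ∈ s, f i) :=
  Finset.sum_induction f Even (fun _ _ => Even.add) Even.zero h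

end PdoAux

theorem odd_card_Pdo_iff_isSquare (n : ℕ) (hn : 1 ≤ n) :
    Odd (Pdo n).card ↔ IsSquare n := by
  open PdoAux in
  rw [Pdo_card_eq n]
  constructor
  · intro hodd
    by_contra hns
    have heven : Even (∑ r ∈ Finset.range (n + 1), (NN n r).card) := by
      apply even_sum_of_even
      intro r _
      rcases Nat.even_or_odd (NN n r).card with he | ho
      · exact he
      · exfalso
        obtain ⟨_, hsq⟩ := (NN_odd_iff r n).mp ho
        exact hns ⟨r, hsq⟩
    rw [Nat.even_iff] at heven
    rw [Nat.odd_iff] at hodd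
    omega
  · rintro ⟨m, hm⟩
    have hm1 : 1 ≤ m := by
      rcases Nat.eq_zero_or_pos m with rfl | h
      · omega
      · exact h
    have hmem : m ∈ Finset.range (n + 1) := by
      apply Finset.mem_range.mpr
      have : m ≤ m * m := Nat.le_mul_of_pos_left m hm1
      omega
    rw [← Finset.add_sum_erase _ _ hmem]
    have hA : Odd (NN n m).card := (NN_odd_iff m n).mpr ⟨hm1, hm⟩
    have hB : Even (∑ r ∈ (Finset.range (n + 1)).erase m, (NN n r).card) := by
      apply even_sum_of_even
      intro r hr
      rcases Nat.even_or_odd (NN n r).card with he | ho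
      · exact he
      · exfalso
        obtain ⟨hr1, hsq⟩ := (NN_odd_iff r n).mp ho
        have hrm : r = m := by nlinarith [hm, hsq]
        exact (Finset.ne_of_mem_erase hr) hrm
    rw [Nat.odd_iff] at hA ⊢
    rw [Nat.even_iff] at hB
    omega
end

section
/- As formal power series in q and a, Ramanujan's partial theta identity holds: 1 + ∑_{k≥1} (-q;q)_{k-1} (-a)^k q^{k(k+1)/2} / (aq^2;q^2)_k = ∑_{k≥0} (-a)^k q^{k^2}. -/
open Finset PowerSeries

namespace RamanujanPT

noncomputable section

/-- The base ring `ℤ[a][[q]]`. -/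
abbrev R : Type := PowerSeries (Polynomial ℤ)

/-- `B = -a` (as a constant power series). -/
def B : R := -(PowerSeries.C (R := Polynomial ℤ) Polynomial.X)

/-- triangular number -/
def tri (k : ℕ) : ℕ := k * (k + 1) / 2

lemma tri_succ (k : ℕ) : tri (k + 1) = tri k + (k + 1) := by
  unfold tri
  rw [show (k + 1) * (k + 1 + 1) = k * (k + 1) + 2 * (k + 1) by ring,
    Nat.add_mul_div_left _ _ (by norm_num : (0:ℕ) < 2)]

lemma tri_ge (k : ℕ) : k + 1 ≤ tri (k + 1) := by
  unfold tri
  rw [Nat.le_div_iff_mul_le (by norm_num)]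
  nlinarith

/-- `(-q;q)_k` -/
def Pi (k : ℕ) : R := ∏ j ∈ range k, (1 + (X : R) ^ (j + 1))

lemma Pi_succ (k : ℕ) : Pi (k + 1) = Pi k * (1 + (X : R) ^ (k + 1)) :=
  Finset.prod_range_succ _ _

/-- `(a q^{2s} q^2 ; q^2)_k` -/
def Dk (s k : ℕ) : R := ∏ j ∈ range k, (1 + B * (X : R) ^ (2 * j + 2 * s + 2))

lemma Dk_zero (s : ℕ) : Dk s 0 = 1 := Finset.prod_range_zero _

lemma Dk_succ (s k : ℕ) :
    Dk s (k + 1) = Dk s k * (1 + B * (X : R) ^ (2 * k + 2 * s + 2)) :=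
  Finset.prod_range_succ _ _

lemma Dk_succ' (s k : ℕ) :
    Dk s (k + 1) = (1 + B * (X : R) ^ (2 * s + 2)) * Dk (s + 1) k := by
  simp only [Dk]
  rw [Finset.prod_range_succ', mul_comm]
  refine congrArg₂ (· * ·) ?_ ?_
  · norm_num
  · apply Finset.prod_congr rfl
    intro j _
    have h : 2 * (j + 1) + 2 * s + 2 = 2 * j + 2 * (s + 1) + 2 := by ring
    rw [h]

lemma constCoeff_Dk (s k : ℕ) :
    PowerSeries.constantCoeff (R := Polynomial ℤ) (Dk s k) = 1 := by
  rw [Dk, map_prod, Finset.prod_eq_one]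
  intro j _
  have h : 2 * j + 2 * s + 2 ≠ 0 := by omega
  simp [B, h, zero_pow]

lemma isUnit_Dk (s k : ℕ) : IsUnit (Dk s k) := by
  rw [PowerSeries.isUnit_iff_constantCoeff, constCoeff_Dk]
  exact isUnit_one

/-- `u_{m+1}[s]`: the summand of the left side, with `a` replaced by `a q^{2s}`. -/
def uu (s m : ℕ) : R :=
  Pi m * B ^ (m + 1) * (X : R) ^ (2 * s * (m + 1) + tri (m + 1)) *
    Ring.inverse (Dk s (m + 1))

/-- the telescoping remainder `z_K[s]`. -/
def zz (s K : ℕ) : R :=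
  -(Pi (K - 1) * B ^ (K + 1) * (X : R) ^ (2 * s * (K + 1) + tri (K + 1))) *
    Ring.inverse (Dk s K)

lemma uu_mul (s m : ℕ) :
    uu s m * Dk s (m + 1)
      = Pi m * B ^ (m + 1) * (X : R) ^ (2 * s * (m + 1) + tri (m + 1)) := by
  rw [uu, Ring.inverse_mul_cancel_right _ _ (isUnit_Dk s (m + 1))]

lemma zz_mul (s K : ℕ) :
    zz s K * Dk s K
      = -(Pi (K - 1) * B ^ (K + 1) * (X : R) ^ (2 * s * (K + 1) + tri (K + 1))) := by
  rw [zz, Ring.inverse_mul_cancel_right _ _ (isUnit_Dk s K)]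

lemma zz_zero (s : ℕ) : zz s 0 = -(B * (X : R) ^ (2 * s + 1)) := by
  rw [zz, Dk_zero, Ring.inverse_one, mul_one]
  norm_num [Pi, tri]

/-- base telescoping step : `u_1[s] = z_1[s] - z_0[s]`. -/
lemma step1 (s : ℕ) : uu s 0 = zz s 1 - zz s 0 := by
  refine (isUnit_Dk s 1).mul_right_cancel ?_
  rw [sub_mul, uu_mul, zz_mul, zz_zero]
  have hD : Dk s 1 = 1 + B * (X : R) ^ (2 * 0 + 2 * s + 2) := by
    rw [Dk, Finset.prod_range_one]
  rw [hD]
  have h1 : tri 1 = 1 := by norm_num [tri]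
  have h2 : tri 2 = 3 := by norm_num [tri]
  norm_num [h1, h2, Pi]
  ring

/-- main telescoping step : `u_{m+2}[s] - B q^{2s+1} u_{m+1}[s+1] = z_{m+2}[s] - z_{m+1}[s]`. -/
lemma step2 (s m : ℕ) :
    uu s (m + 1) - B * (X : R) ^ (2 * s + 1) * uu (s + 1) m
      = zz s (m + 2) - zz s (m + 1) := by
  refine (isUnit_Dk s (m + 2)).mul_right_cancel ?_
  have hD' : Dk s (m + 2) = (1 + B * (X : R) ^ (2 * s + 2)) * Dk (s + 1) (m + 1) :=
    Dk_succ' s (m + 1)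
  have hD : Dk s (m + 2) = Dk s (m + 1) * (1 + B * (X : R) ^ (2 * (m + 1) + 2 * s + 2)) :=
    Dk_succ s (m + 1)
  have hu2 := uu_mul s (m + 1)
  have hu1 := uu_mul (s + 1) m
  have hz2 := zz_mul s (m + 2)
  have hz1 := zz_mul s (m + 1)
  have e1 : (m + 2) - 1 = m + 1 := by omega
  have e2 : (m + 1) - 1 = m := by omega
  rw [e1] at hz2
  rw [e2] at hz1
  have t2 : tri (m + 2) = tri (m + 1) + (m + 2) := tri_succ (m + 1)
  have t3 : tri (m + 3) = tri (m + 1) + (2 * m + 5) := by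
    rw [show m + 3 = (m + 2) + 1 from rfl, tri_succ, t2]; omega
  rw [t2] at hu2 hz1
  rw [t3] at hz2
  have hPi : Pi (m + 1) = Pi m * (1 + (X : R) ^ (m + 1)) := Pi_succ m
  rw [hPi] at hu2 hz2
  linear_combination hu2 - (B * (X : R) ^ (2 * s + 1)) * uu (s + 1) m * hD'
    - (B * (X : R) ^ (2 * s + 1)) * (1 + B * (X : R) ^ (2 * s + 2)) * hu1
    - hz2 + zz s (m + 1) * hD + (1 + B * (X : R) ^ (2 * (m + 1) + 2 * s + 2)) * hz1

/-- functional equation, finite form. -/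
lemma FE (K s : ℕ) :
    (∑ m ∈ range (K + 1), uu s m)
      - B * (X : R) ^ (2 * s + 1) * ∑ m ∈ range K, uu (s + 1) m
      = zz s (K + 1) - zz s 0 := by
  induction K with
  | zero => simpa using step1 s
  | succ K ih =>
      rw [Finset.sum_range_succ (f := uu s), Finset.sum_range_succ (f := uu (s + 1))]
      have h := step2 s K
      calc (∑ m ∈ range (K + 1), uu s m) + uu s (K + 1)
            - B * (X : R) ^ (2 * s + 1) * ((∑ m ∈ range K, uu (s + 1) m) + uu (s + 1) K)
          = ((∑ m ∈ range (K + 1), uu s m)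
              - B * (X : R) ^ (2 * s + 1) * ∑ m ∈ range K, uu (s + 1) m)
            + (uu s (K + 1) - B * (X : R) ^ (2 * s + 1) * uu (s + 1) K) := by ring
        _ = (zz s (K + 1) - zz s 0) + (zz s (K + 2) - zz s (K + 1)) := by rw [ih, h]
        _ = zz s (K + 2) - zz s 0 := by ring

/-- main unrolled identity. -/
lemma main (K : ℕ) : ∀ s : ℕ,
    1 + ∑ m ∈ range K, uu s m
      = (∑ m ∈ range (K + 1), B ^ m * (X : R) ^ (2 * s * m + m ^ 2))
        + ∑ m ∈ range K, B ^ m * (X : R) ^ (2 * s * m + m ^ 2) * zz (s + m) (K - m) := by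
  induction K with
  | zero =>
      intro s
      simp
  | succ K ih =>
      intro s
      have hFE := FE K s
      have hsum : ∑ m ∈ range (K + 1), uu s m
          = B * (X : R) ^ (2 * s + 1) * (∑ m ∈ range K, uu (s + 1) m)
            + zz s (K + 1) - zz s 0 := by
        linear_combination hFE
      rw [hsum, zz_zero]
      have ih' := ih (s + 1)
      have hexp : (∑ m ∈ range K, uu (s + 1) m)
          = ((∑ m ∈ range (K + 1), B ^ m * (X : R) ^ (2 * (s + 1) * m + m ^ 2))
            + (∑ m ∈ range K, B ^ m * (X : R) ^ (2 * (s + 1) * m + m ^ 2) * zz (s + 1 + m) (K - m))) - 1 := by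
        linear_combination ih'
      rw [hexp]
      have hth : ∑ m ∈ range (K + 1 + 1), B ^ m * (X : R) ^ (2 * s * m + m ^ 2)
          = (∑ m ∈ range (K + 1),
              B * (X : R) ^ (2 * s + 1) * (B ^ m * (X : R) ^ (2 * (s + 1) * m + m ^ 2))) + 1 := by
        rw [Finset.sum_range_succ' (f := fun m => B ^ m * (X : R) ^ (2 * s * m + m ^ 2))]
        refine congrArg₂ (· + ·) ?_ ?_
        · apply Finset.sum_congr rfl
          intro m _
          ring
        · norm_num
      have herr : ∑ m ∈ range (K + 1), B ^ m * (X : R) ^ (2 * s * m + m ^ 2) * zz (s + m) (K + 1 - m)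
          = (∑ m ∈ range K,
              B * (X : R) ^ (2 * s + 1)
                * (B ^ m * (X : R) ^ (2 * (s + 1) * m + m ^ 2) * zz (s + 1 + m) (K - m)))
            + zz s (K + 1) := by
        rw [Finset.sum_range_succ'
          (f := fun m => B ^ m * (X : R) ^ (2 * s * m + m ^ 2) * zz (s + m) (K + 1 - m))]
        refine congrArg₂ (· + ·) ?_ ?_
        · apply Finset.sum_congr rfl
          intro m _
          have h1 : s + (m + 1) = s + 1 + m := by omega
          have h2 : K + 1 - (m + 1) = K - m := by omega
          rw [h1, h2]
          ring
        · norm_num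
      rw [hth, herr]
      rw [← Finset.mul_sum (range (K + 1)) (fun m => B ^ m * (X : R) ^ (2 * (s + 1) * m + m ^ 2))
          (B * (X : R) ^ (2 * s + 1)),
        ← Finset.mul_sum (range K)
          (fun m => B ^ m * (X : R) ^ (2 * (s + 1) * m + m ^ 2) * zz (s + 1 + m) (K - m))
          (B * (X : R) ^ (2 * s + 1))]
      ring

end

end RamanujanPT

open RamanujanPT in
/-- Ramanujan's partial theta identity, as an identity of formal power series in `q`
with coefficients in `ℤ[a]`.  Since every term of index `k > N` has order `> N`, the
`N`-th coefficient of each side is computed from the displayed finite truncations. -/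
theorem ramanujan_partial_theta (N : ℕ) :
    PowerSeries.coeff (R := Polynomial ℤ) N
      (1 + ∑ k ∈ Finset.Icc 1 N,
        (∏ j ∈ Finset.range (k - 1), (1 + PowerSeries.X ^ (j + 1))) *
          (-(PowerSeries.C (R := Polynomial ℤ) Polynomial.X)) ^ k *
          PowerSeries.X ^ (k * (k + 1) / 2) *
          Ring.inverse (∏ j ∈ Finset.range k,
            (1 - PowerSeries.C (R := Polynomial ℤ) Polynomial.X * PowerSeries.X ^ (2 * j + 2)))) =
    PowerSeries.coeff (R := Polynomial ℤ) N
      (∑ k ∈ Finset.range (N + 1),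
        (-(PowerSeries.C (R := Polynomial ℤ) Polynomial.X)) ^ k * PowerSeries.X ^ (k ^ 2)) := by
  classical
  have hIcc : ∀ (f : ℕ → R) (n : ℕ), (∑ k ∈ Finset.Icc 1 n, f k)
      = ∑ m ∈ Finset.range n, f (m + 1) := by
    intro f n
    induction n with
    | zero => simp
    | succ n ih =>
        rw [Finset.sum_Icc_succ_top (by omega : 1 ≤ n + 1), ih, Finset.sum_range_succ]
  rw [hIcc]
  have hterm : ∀ m : ℕ,
      (∏ j ∈ Finset.range ((m + 1) - 1), (1 + (PowerSeries.X : R) ^ (j + 1))) *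
        (-(PowerSeries.C (R := Polynomial ℤ) Polynomial.X)) ^ (m + 1) *
        PowerSeries.X ^ ((m + 1) * ((m + 1) + 1) / 2) *
        Ring.inverse (∏ j ∈ Finset.range (m + 1),
          (1 - PowerSeries.C (R := Polynomial ℤ) Polynomial.X * PowerSeries.X ^ (2 * j + 2)))
      = uu 0 m := by
    intro m
    have hD : (∏ j ∈ Finset.range (m + 1),
        (1 - PowerSeries.C (R := Polynomial ℤ) Polynomial.X * (PowerSeries.X : R) ^ (2 * j + 2)))
        = Dk 0 (m + 1) := by
      simp only [Dk]
      apply Finset.prod_congr rfl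
      intro j _
      simp only [B]
      ring
    have he : (m + 1) * ((m + 1) + 1) / 2 = 2 * 0 * (m + 1) + tri (m + 1) := by
      simp [tri]
    rw [hD, he]
    simp only [uu, Pi, B, Nat.add_sub_cancel]
  rw [Finset.sum_congr rfl (fun m _ => hterm m), main N 0, map_add, map_sum]
  have herr0 : ∀ m ∈ Finset.range N,
      (PowerSeries.coeff (R := Polynomial ℤ) N)
        (B ^ m * (PowerSeries.X : R) ^ (2 * 0 * m + m ^ 2) * zz (0 + m) (N - m)) = 0 := by
    intro m hm
    have hmN : m < N := Finset.mem_range.mp hm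
    set K' := N - m with hK'
    have h1 : (PowerSeries.X : R) ^ (2 * 0 * m + m ^ 2)
        ∣ B ^ m * (PowerSeries.X : R) ^ (2 * 0 * m + m ^ 2) := ⟨B ^ m, by ring⟩
    have h2 : (PowerSeries.X : R) ^ (2 * (0 + m) * (K' + 1) + tri (K' + 1)) ∣ zz (0 + m) K' :=
      ⟨-(Pi (K' - 1) * B ^ (K' + 1)) * Ring.inverse (Dk (0 + m) K'), by rw [zz]; ring⟩
    have h3 : (PowerSeries.X : R) ^ ((2 * 0 * m + m ^ 2) + (2 * (0 + m) * (K' + 1) + tri (K' + 1)))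
        ∣ B ^ m * (PowerSeries.X : R) ^ (2 * 0 * m + m ^ 2) * zz (0 + m) K' := by
      rw [pow_add]
      exact mul_dvd_mul h1 h2
    have hle : N + 1 ≤ (2 * 0 * m + m ^ 2) + (2 * (0 + m) * (K' + 1) + tri (K' + 1)) := by
      have ht := tri_ge K'
      have hm2 : m ≤ m ^ 2 := Nat.le_self_pow two_ne_zero m
      calc N + 1 = m + (K' + 1) := by omega
        _ ≤ m ^ 2 + tri (K' + 1) := Nat.add_le_add hm2 ht
        _ ≤ (2 * 0 * m + m ^ 2) + (2 * (0 + m) * (K' + 1) + tri (K' + 1)) :=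
            Nat.add_le_add (Nat.le_add_left _ _) (Nat.le_add_left _ _)
    have h4 : (PowerSeries.X : R) ^ (N + 1)
        ∣ B ^ m * (PowerSeries.X : R) ^ (2 * 0 * m + m ^ 2) * zz (0 + m) K' :=
      dvd_trans (pow_dvd_pow _ hle) h3
    exact PowerSeries.X_pow_dvd_iff.mp h4 N (lt_add_one N)
  rw [map_sum, Finset.sum_eq_zero herr0, add_zero, map_sum]
  apply Finset.sum_congr rfl
  intro k _
  have hk : B ^ k * (PowerSeries.X : R) ^ (2 * 0 * k + k ^ 2)
      = (-(PowerSeries.C (R := Polynomial ℤ) Polynomial.X)) ^ k * PowerSeries.X ^ (k ^ 2) := by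
    norm_num [B]
  rw [hk]
end

section
/- As formal power series in q and a, Andrews' partial theta identity holds: ∑_{n≥0} q^{2n} (q^{2n+2};q^2)_∞ (aq^{2n+1};q^2)_∞ = ∑_{k≥0} (-a)^k q^{k^2}. -/
open PowerSeries Finset

namespace AndrewsAux

noncomputable section

abbrev A : Type := PowerSeries (Polynomial ℤ)

def aa : A := PowerSeries.C (R := Polynomial ℤ) Polynomial.X

local notation "XX" => (PowerSeries.X : A)

variable (N : ℕ)

def Q : A →+* A ⧸ (Ideal.span {XX ^ (N + 1)}) := Ideal.Quotient.mk _

lemma Q_X_pow {e : ℕ} (he : N + 1 ≤ e) : Q N (XX ^ e) = 0 := by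
  rw [Q, Ideal.Quotient.eq_zero_iff_mem, Ideal.mem_span_singleton]
  exact pow_dvd_pow _ he

lemma Q_one_sub_mul {c : A} {e : ℕ} (he : N + 1 ≤ e) : Q N (1 - c * XX ^ e) = 1 := by
  rw [map_sub, map_one, map_mul, Q_X_pow N he, mul_zero, sub_zero]

lemma Q_one_sub {e : ℕ} (he : N + 1 ≤ e) : Q N (1 - XX ^ e) = 1 := by
  rw [map_sub, map_one, Q_X_pow N he, sub_zero]

/-- truncated even product, exponents `2n+2 .. 2n+2M` -/
def Ee (M n : ℕ) : A := ∏ j ∈ range M, (1 - XX ^ (2 * n + 2 + 2 * j))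

/-- truncated odd product with shift `2k`, exponents `2n+2k+1 .. ` -/
def Oo (M k n : ℕ) : A := ∏ j ∈ range M, (1 - aa * XX ^ (2 * n + 1 + 2 * k + 2 * j))

/-- telescoping quantity -/
def T (k n : ℕ) : A :=
  (∏ j ∈ range (N + 1), (1 - XX ^ (2 * n + 2 * j))) *
  (∏ j ∈ range (N + 1), (1 - aa * XX ^ (2 * n + 2 * k + 1 + 2 * j)))

def F (k : ℕ) : A := ∑ n ∈ range (N + 1), XX ^ (2 * n) * Ee (N + 1) n * Oo (N + 1) k n

lemma Oo_split (k n : ℕ) :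
    Oo (N + 1) k n = Oo N (k + 1) n * (1 - aa * XX ^ (2 * n + 2 * k + 1)) := by
  rw [Oo, Finset.prod_range_succ']
  refine congrArg₂ (· * ·) ?_ ?_
  · apply Finset.prod_congr rfl
    intro i _
    rw [show 2 * n + 1 + 2 * k + 2 * (i + 1) = 2 * n + 1 + 2 * (k + 1) + 2 * i from by ring]
  · rw [show 2 * n + 1 + 2 * k + 2 * 0 = 2 * n + 2 * k + 1 from by ring]

lemma Q_Oo_top (k n : ℕ) : Q N (Oo (N + 1) (k + 1) n) = Q N (Oo N (k + 1) n) := by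
  rw [Oo, Finset.prod_range_succ, map_mul, Q_one_sub_mul N (by omega), mul_one]
  rfl

lemma Q_Ee_top (n : ℕ) : Q N (Ee (N + 1) n) = Q N (Ee N n) := by
  rw [Ee, Finset.prod_range_succ, map_mul, Q_one_sub N (by omega), mul_one]
  rfl

lemma T_succ (k n : ℕ) : T N k (n + 1) = Ee (N + 1) n * Oo (N + 1) (k + 1) n := by
  rw [T, Ee, Oo]
  have h1 : ∏ j ∈ range (N + 1), (1 - XX ^ (2 * (n + 1) + 2 * j))
      = ∏ j ∈ range (N + 1), (1 - XX ^ (2 * n + 2 + 2 * j)) := by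
    apply Finset.prod_congr rfl
    intro j _
    rw [show 2 * (n + 1) + 2 * j = 2 * n + 2 + 2 * j from by ring]
  have h2 : ∏ j ∈ range (N + 1), (1 - aa * XX ^ (2 * (n + 1) + 2 * k + 1 + 2 * j))
      = ∏ j ∈ range (N + 1), (1 - aa * XX ^ (2 * n + 1 + 2 * (k + 1) + 2 * j)) := by
    apply Finset.prod_congr rfl
    intro j _
    rw [show 2 * (n + 1) + 2 * k + 1 + 2 * j = 2 * n + 1 + 2 * (k + 1) + 2 * j from by ring]
  rw [h1, h2]

lemma T_eq (k n : ℕ) :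
    T N k n = (1 - XX ^ (2 * n)) * (1 - aa * XX ^ (2 * n + 2 * k + 1)) *
      (Ee N n * Oo N (k + 1) n) := by
  rw [T, Finset.prod_range_succ', Finset.prod_range_succ']
  have h1 : ∏ i ∈ range N, (1 - XX ^ (2 * n + 2 * (i + 1))) = Ee N n := by
    apply Finset.prod_congr rfl
    intro i _
    rw [show 2 * n + 2 * (i + 1) = 2 * n + 2 + 2 * i from by ring]
  have h2 : ∏ i ∈ range N, (1 - aa * XX ^ (2 * n + 2 * k + 1 + 2 * (i + 1)))
      = Oo N (k + 1) n := by
    apply Finset.prod_congr rfl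
    intro i _
    rw [show 2 * n + 2 * k + 1 + 2 * (i + 1) = 2 * n + 1 + 2 * (k + 1) + 2 * i from by ring]
  rw [h1, h2, show 2 * n + 2 * 0 = 2 * n from by ring,
    show 2 * n + 2 * k + 1 + 2 * 0 = 2 * n + 2 * k + 1 from by ring]
  ring

lemma per_n (k n : ℕ) :
    Q N (XX ^ (2 * n) * Ee (N + 1) n * Oo (N + 1) k n)
      + Q N (aa * XX ^ (2 * k + 1)) * Q N (XX ^ (2 * n) * Ee (N + 1) n * Oo (N + 1) (k + 1) n)
    = Q N (T N k (n + 1)) - Q N (T N k n) := by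
  rw [T_succ, T_eq, Oo_split]
  simp only [map_mul, map_sub, map_one, map_pow]
  rw [Q_Ee_top, Q_Oo_top]
  ring

lemma T_zero (k : ℕ) : T N k 0 = 0 := by
  rw [T]
  have h0 : (1 - XX ^ (2 * 0 + 2 * 0) : A) = 0 := by norm_num
  rw [Finset.prod_eq_zero (Finset.mem_range.mpr (Nat.succ_pos N)) h0, zero_mul]

lemma Q_T_top (k : ℕ) : Q N (T N k (N + 1)) = 1 := by
  rw [T, map_mul, map_prod, map_prod]
  rw [Finset.prod_eq_one fun j _ => Q_one_sub N (by omega),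
    Finset.prod_eq_one fun j _ => Q_one_sub_mul N (by omega), mul_one]

lemma step (k : ℕ) :
    Q N (F N k) + Q N (aa * XX ^ (2 * k + 1)) * Q N (F N (k + 1)) = 1 := by
  rw [F, F, map_sum, map_sum, Finset.mul_sum, ← Finset.sum_add_distrib]
  rw [Finset.sum_congr rfl fun n _ => per_n N k n]
  rw [Finset.sum_range_sub (fun n => Q N (T N k n))]
  rw [T_zero, map_zero, sub_zero, Q_T_top]

lemma unroll (K : ℕ) :
    Q N (F N 0) = Q N (∑ k ∈ range K, (-aa) ^ k * XX ^ (k ^ 2))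
      + (-(Q N aa)) ^ K * (Q N XX) ^ (K ^ 2) * Q N (F N K) := by
  induction K with
  | zero => simp
  | succ K ih =>
    have hs := step N K
    have hF : Q N (F N K) = 1 - Q N (aa * XX ^ (2 * K + 1)) * Q N (F N (K + 1)) := by
      linear_combination hs
    rw [ih, hF, Finset.sum_range_succ, map_add]
    simp only [map_mul, map_pow, map_neg]
    rw [show (K + 1) ^ 2 = K ^ 2 + (2 * K + 1) from by ring]
    ring

lemma main : Q N (F N 0) = Q N (∑ k ∈ range (N + 1), (-aa) ^ k * XX ^ (k ^ 2)) := by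
  rw [unroll N (N + 1)]
  have : (Q N XX) ^ ((N + 1) ^ 2) = 0 := by
    rw [← map_pow, Q_X_pow N (by nlinarith)]
  rw [this, mul_zero, zero_mul, add_zero]

end

end AndrewsAux

/-- Andrews' partial theta identity
`∑_{n≥0} q^{2n} (q^{2n+2};q²)_∞ (aq^{2n+1};q²)_∞ = ∑_{k≥0} (-a)^k q^{k²}`,
as an identity of formal power series in `q` over `ℤ[a]`.  Summands with `n > N` and
factors of the infinite products with index `j > N` have no effect on the `N`-th
coefficient, so that coefficient is computed from the displayed finite truncations. -/
theorem andrews_partial_theta (N : ℕ) :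
    PowerSeries.coeff (R := Polynomial ℤ) N
      (∑ n ∈ Finset.range (N + 1),
        PowerSeries.X ^ (2 * n) *
          (∏ j ∈ Finset.range (N + 1), (1 - PowerSeries.X ^ (2 * n + 2 + 2 * j))) *
          (∏ j ∈ Finset.range (N + 1),
            (1 - PowerSeries.C (R := Polynomial ℤ) Polynomial.X *
              PowerSeries.X ^ (2 * n + 1 + 2 * j)))) =
    PowerSeries.coeff (R := Polynomial ℤ) N
      (∑ k ∈ Finset.range (N + 1),
        (-(PowerSeries.C (R := Polynomial ℤ) Polynomial.X)) ^ k * PowerSeries.X ^ (k ^ 2)) := by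
  classical
  set lhs : AndrewsAux.A :=
    ∑ n ∈ Finset.range (N + 1),
      PowerSeries.X ^ (2 * n) *
        (∏ j ∈ Finset.range (N + 1), (1 - PowerSeries.X ^ (2 * n + 2 + 2 * j))) *
        (∏ j ∈ Finset.range (N + 1),
          (1 - PowerSeries.C (R := Polynomial ℤ) Polynomial.X *
            PowerSeries.X ^ (2 * n + 1 + 2 * j))) with hlhs
  set rhs : AndrewsAux.A :=
    ∑ k ∈ Finset.range (N + 1),
      (-(PowerSeries.C (R := Polynomial ℤ) Polynomial.X)) ^ k * PowerSeries.X ^ (k ^ 2) with hrhs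
  have hL : lhs = AndrewsAux.F N 0 := by
    rw [hlhs, AndrewsAux.F]
    apply Finset.sum_congr rfl
    intro n _
    rw [AndrewsAux.Ee, AndrewsAux.Oo, AndrewsAux.aa]
  have hR : rhs = ∑ k ∈ Finset.range (N + 1), (-AndrewsAux.aa) ^ k * PowerSeries.X ^ (k ^ 2) :=
    rfl
  have hQ : AndrewsAux.Q N lhs = AndrewsAux.Q N rhs := by
    rw [hL, hR]
    exact AndrewsAux.main N
  have hdvd : (PowerSeries.X : AndrewsAux.A) ^ (N + 1) ∣ lhs - rhs := by
    rw [← Ideal.mem_span_singleton]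
    exact Ideal.Quotient.eq.mp hQ
  have h2 := (PowerSeries.X_pow_dvd_iff.mp hdvd) N (by omega)
  rw [map_sub, sub_eq_zero] at h2
  exact h2
end

section
/- As formal power series in q and a: ∑_{n≥1} (-a) q^{2n-1} (q^{2n};q^2)_∞ (aq^{2n+1};q^2)_∞ = ∑_{n≥1} (-a)^n q^{n^2}. -/
/-
Proof of Alladi's partial theta identity, via a fully finitary argument
modulo X^(N+2) in the power series ring over ℤ[a].
-/

noncomputable section
namespace AlladiAux
open PowerSeries Finset

abbrev R : Type := PowerSeries (Polynomial ℤ)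
def A : R := PowerSeries.C (R := Polynomial ℤ) Polynomial.X
local notation "XX" => (PowerSeries.X : R)

def Gq (n J : ℕ) : R := ∏ j ∈ range J, (1 - XX ^ (2*n + 2*j))
def Pa (n J : ℕ) : R := ∏ j ∈ range J, (1 - A * XX ^ (2*n + 1 + 2*j))
def Gk (m : ℕ) : R := ∏ i ∈ range m, (1 - XX ^ (2*i + 2))

lemma ccGk (m : ℕ) : constantCoeff (R := Polynomial ℤ) (Gk m) = 1 := by
  simp [Gk, map_prod]

def Eu (m : ℕ) : R := invOfUnit (Gk m) 1

lemma Gk_mul_Eu (m : ℕ) : Gk m * Eu m = 1 :=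
  mul_invOfUnit _ _ (by simp [ccGk])

lemma Eu_zero : Eu 0 = 1 := by
  have h := Gk_mul_Eu 0
  simpa [Gk] using h

lemma Gk_succ (m : ℕ) : Gk (m+1) = Gk m * (1 - XX ^ (2*m + 2)) := prod_range_succ _ _

lemma Eu_succ (m : ℕ) : (1 - XX ^ (2*m+2)) * Eu (m+1) = Eu m := by
  have h1 : Gk m * ((1 - XX ^ (2*m+2)) * Eu (m+1)) = 1 := by
    rw [← mul_assoc, ← Gk_succ]; exact Gk_mul_Eu (m+1)
  calc (1 - XX ^ (2*m+2)) * Eu (m+1)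
      = (Eu m * Gk m) * ((1 - XX ^ (2*m+2)) * Eu (m+1)) := by rw [mul_comm (Eu m), Gk_mul_Eu, one_mul]
    _ = Eu m * (Gk m * ((1 - XX ^ (2*m+2)) * Eu (m+1))) := by ring
    _ = Eu m := by rw [h1, mul_one]


lemma Gq_dvd_sub_one (n J : ℕ) : (XX)^(2*n) ∣ Gq n J - 1 := by
  induction J with
  | zero => simp [Gq]
  | succ J ih =>
    have h : Gq n (J+1) = Gq n J * (1 - XX ^ (2*n + 2*J)) := prod_range_succ _ _
    have h2 : Gq n (J+1) - 1 = (Gq n J - 1) - Gq n J * XX ^ (2*n + 2*J) := by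
      rw [h]; ring
    rw [h2]
    exact dvd_sub ih (Dvd.dvd.mul_left (pow_dvd_pow _ (by omega)) _)

lemma Pa_dvd_sub_one (n J : ℕ) : (XX)^(2*n+1) ∣ Pa n J - 1 := by
  induction J with
  | zero => simp [Pa]
  | succ J ih =>
    have h : Pa n (J+1) = Pa n J * (1 - A * XX ^ (2*n + 1 + 2*J)) := prod_range_succ _ _
    have h2 : Pa n (J+1) - 1 = (Pa n J - 1) - (Pa n J * A) * XX ^ (2*n + 1 + 2*J) := by
      rw [h]; ring
    rw [h2]
    exact dvd_sub ih (Dvd.dvd.mul_left (pow_dvd_pow _ (by omega)) _)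

/-- reduction mod X^D -/
def pim (D : ℕ) : R →+* R ⧸ Ideal.span {(XX)^D} := Ideal.Quotient.mk _

lemma pim_zero {D : ℕ} {f : R} (h : (XX)^D ∣ f) : pim D f = 0 := by
  rw [pim, Ideal.Quotient.eq_zero_iff_mem, Ideal.mem_span_singleton]
  exact h

lemma pim_Xpow {D e : ℕ} (h : D ≤ e) : pim D ((XX : R)^e) = 0 :=
  pim_zero (pow_dvd_pow _ h)

lemma pim_of_dvd_sub {D : ℕ} {f g : R} (h : (XX)^D ∣ f - g) : pim D f = pim D g := by
  have : pim D (f - g) = 0 := pim_zero h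
  rw [map_sub, sub_eq_zero] at this
  exact this

lemma pim_Gq_one {D n : ℕ} (J : ℕ) (h : D ≤ 2*n) : pim D (Gq n J) = 1 := by
  have := pim_of_dvd_sub (dvd_trans (pow_dvd_pow (XX:R) h) (Gq_dvd_sub_one n J))
  simpa using this

lemma pim_Pa_one {D n : ℕ} (J : ℕ) (h : D ≤ 2*n+1) : pim D (Pa n J) = 1 := by
  have := pim_of_dvd_sub (dvd_trans (pow_dvd_pow (XX:R) h) (Pa_dvd_sub_one n J))
  simpa using this

lemma pim_Gq_add {D n J : ℕ} (k : ℕ) (h : D ≤ 2*n + 2*J) :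
    pim D (Gq n (J+k)) = pim D (Gq n J) := by
  induction k with
  | zero => rfl
  | succ k ih =>
    have hs : Gq n (J+k+1) = Gq n (J+k) * (1 - XX ^ (2*n + 2*(J+k))) := prod_range_succ _ _
    rw [show J + (k+1) = J + k + 1 from rfl, hs, map_mul, map_sub, map_one,
      pim_Xpow (le_trans h (by omega)), sub_zero, mul_one, ih]

lemma pim_Gq_le {D n J J' : ℕ} (h : D ≤ 2*n + 2*J) (h' : J ≤ J') :
    pim D (Gq n J') = pim D (Gq n J) := by
  obtain ⟨k, rfl⟩ := Nat.exists_eq_add_of_le h'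
  exact pim_Gq_add k h

lemma pim_Pa_add {D n J : ℕ} (k : ℕ) (h : D ≤ 2*n + 1 + 2*J) :
    pim D (Pa n (J+k)) = pim D (Pa n J) := by
  induction k with
  | zero => rfl
  | succ k ih =>
    have hs : Pa n (J+k+1) = Pa n (J+k) * (1 - A * XX ^ (2*n + 1 + 2*(J+k))) := prod_range_succ _ _
    rw [show J + (k+1) = J + k + 1 from rfl, hs, map_mul, map_sub, map_mul, map_one,
      pim_Xpow (le_trans h (by omega)), mul_zero, sub_zero, mul_one, ih]

lemma pim_Pa_le {D n J J' : ℕ} (h : D ≤ 2*n + 1 + 2*J) (h' : J ≤ J') :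
    pim D (Pa n J') = pim D (Pa n J) := by
  obtain ⟨k, rfl⟩ := Nat.exists_eq_add_of_le h'
  exact pim_Pa_add k h

lemma Gq_succ' (n J : ℕ) : Gq n (J+1) = (1 - XX ^ (2*n)) * Gq (n+1) J := by
  have he : ∀ j : ℕ, 2*n + 2*(j+1) = 2*(n+1) + 2*j := by omega
  calc Gq n (J+1)
      = (∏ j ∈ range J, (1 - (XX:R) ^ (2*n + 2*(j+1)))) * (1 - (XX:R) ^ (2*n + 2*0)) :=
        prod_range_succ' _ _
    _ = Gq (n+1) J * (1 - XX ^ (2*n)) := by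
        rw [show 2*n + 2*0 = 2*n by omega]
        congr 1
        exact Finset.prod_congr rfl fun j _ => by rw [he j]
    _ = (1 - XX ^ (2*n)) * Gq (n+1) J := mul_comm _ _

lemma Pa_succ' (n J : ℕ) : Pa n (J+1) = (1 - A * XX ^ (2*n+1)) * Pa (n+1) J := by
  have he : ∀ j : ℕ, 2*n + 1 + 2*(j+1) = 2*(n+1) + 1 + 2*j := by omega
  calc Pa n (J+1)
      = (∏ j ∈ range J, (1 - A * (XX:R) ^ (2*n + 1 + 2*(j+1)))) * (1 - A * (XX:R) ^ (2*n + 1 + 2*0)) :=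
        prod_range_succ' _ _
    _ = Pa (n+1) J * (1 - A * XX ^ (2*n+1)) := by
        rw [show 2*n + 1 + 2*0 = 2*n+1 by omega]
        exact congrArg (fun x => x * (1 - A * XX ^ (2*n+1))) (Finset.prod_congr rfl fun j _ => by rw [he j])
    _ = (1 - A * XX ^ (2*n+1)) * Pa (n+1) J := mul_comm _ _

/-- partial Euler expansion -/
def g (μ n : ℕ) : R := ∑ m ∈ range (μ+1), (-A)^m * XX^(m*(2*n+m)) * Eu m

lemma g_rec (μ n : ℕ) :
    g μ n = (1 - A * XX^(2*n+1)) * g μ (n+1)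
      - (-A)^(μ+1) * XX^((μ+1)*(2*n+(μ+1))) * Eu μ := by
  set u : ℕ → R := fun m => (-A)^m * XX^(m*(2*n+m)) * Eu m with hu
  set v : ℕ → R := fun m => (-A)^m * XX^(m*(2*(n+1)+m)) * Eu m with hv
  set w : ℕ → R := fun m => (-A)^(m+1) * XX^((m+1)*(2*n+(m+1))) * Eu m with hw
  have c1 : ∀ m : ℕ, u (m+1) = v (m+1) + w m := by
    intro m
    have he : (m+1)*(2*(n+1)+(m+1)) = (m+1)*(2*n+(m+1)) + (2*m+2) := by ring
    have : u (m+1) - v (m+1) = w m := by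
      rw [hu, hv, hw]
      simp only []
      calc (-A)^(m+1) * XX^((m+1)*(2*n+(m+1))) * Eu (m+1)
            - (-A)^(m+1) * XX^((m+1)*(2*(n+1)+(m+1))) * Eu (m+1)
          = (-A)^(m+1) * XX^((m+1)*(2*n+(m+1))) * ((1 - XX^(2*m+2)) * Eu (m+1)) := by
            rw [he, pow_add]; ring
        _ = (-A)^(m+1) * XX^((m+1)*(2*n+(m+1))) * Eu m := by rw [Eu_succ m]
    rw [← this]; ring
  have c2 : ∀ m : ℕ, w m = (-(A * XX^(2*n+1))) * v m := by
    intro m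
    have he : (m+1)*(2*n+(m+1)) = (2*n+1) + m*(2*(n+1)+m) := by ring
    rw [hw, hv]
    simp only []
    rw [he, pow_add, pow_succ]
    ring
  have e1 : g μ n = ∑ m ∈ range μ, u (m+1) + u 0 := sum_range_succ' u μ
  have e2 : g μ (n+1) = ∑ m ∈ range μ, v (m+1) + v 0 := sum_range_succ' v μ
  have e3 : ∑ m ∈ range μ, u (m+1) = ∑ m ∈ range μ, v (m+1) + ∑ m ∈ range μ, w m := by
    rw [← sum_add_distrib]
    exact Finset.sum_congr rfl fun m _ => c1 m
  have e4 : ∑ m ∈ range (μ+1), w m = ∑ m ∈ range μ, w m + w μ := sum_range_succ w μ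
  have e5 : ∑ m ∈ range (μ+1), w m = (-(A * XX^(2*n+1))) * g μ (n+1) := by
    rw [show ((-(A * XX^(2*n+1))) * g μ (n+1)) = ∑ m ∈ range (μ+1), (-(A * XX^(2*n+1))) * v m
      from Finset.mul_sum _ _ _]
    exact Finset.sum_congr rfl fun m _ => c2 m
  have hu0 : u 0 = v 0 := by rw [hu, hv]; norm_num
  have hwμ : w μ = (-A)^(μ+1) * XX^((μ+1)*(2*n+(μ+1))) * Eu μ := rfl
  calc g μ n = ∑ m ∈ range μ, u (m+1) + u 0 := e1
    _ = (∑ m ∈ range μ, v (m+1) + v 0) + (∑ m ∈ range (μ+1), w m - w μ) := by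
        rw [e3, e4]; rw [hu0]; ring
    _ = g μ (n+1) + (-(A * XX^(2*n+1))) * g μ (n+1) - w μ := by rw [← e2, e5]; ring
    _ = (1 - A * XX^(2*n+1)) * g μ (n+1) - (-A)^(μ+1) * XX^((μ+1)*(2*n+(μ+1))) * Eu μ := by
        rw [← hwμ]; ring

lemma pim_g_one {D μ n : ℕ} (h : D ≤ 2*n+1) : pim D (g μ n) = 1 := by
  rw [g, map_sum]
  rw [Finset.sum_eq_single 0]
  · simp [Eu_zero]
  · intro m _ hm
    have h1 : D ≤ m*(2*n+m) := by
      have : 1 ≤ m := Nat.one_le_iff_ne_zero.mpr hm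
      calc D ≤ 2*n+1 := h
        _ ≤ m*(2*n+m) := by nlinarith
    rw [map_mul, map_mul, pim_Xpow h1, mul_zero, zero_mul]
  · intro h0; exact absurd (mem_range.mpr (Nat.succ_pos μ)) h0

/-- Euler expansion mod X^D with D = N+2, μ = N -/
lemma pim_Pa_eq_g (N : ℕ) : ∀ t n : ℕ, n + t = N + 2 → 1 ≤ n →
    pim (N+2) (Pa n (N+2-n)) = pim (N+2) (g N n) := by
  intro t
  induction t with
  | zero =>
    intro n hn _
    have hn' : n = N+2 := by omega
    subst hn'
    rw [show N+2-(N+2) = 0 from by omega]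
    rw [pim_Pa_one 0 (by omega), pim_g_one (by omega)]
  | succ t ih =>
    intro n hn hn1
    have hJ : N+2-n = t+1 := by omega
    have ih' := ih (n+1) (by omega) (by omega)
    rw [show N+2-(n+1) = t from by omega] at ih'
    have hg := g_rec N n
    have hcorr : pim (N+2) ((-A)^(N+1) * XX^((N+1)*(2*n+(N+1))) * Eu N) = 0 := by
      have : N+2 ≤ (N+1)*(2*n+(N+1)) := by nlinarith
      rw [map_mul, map_mul, pim_Xpow this, mul_zero, zero_mul]
    rw [hJ, Pa_succ', map_mul, ih']
    conv_rhs => rw [hg, map_sub, hcorr, sub_zero, map_mul]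

section S
variable (N : ℕ)

def SS (k : ℕ) : R := ∑ i ∈ range N, XX^(2*(i+1)*k) * Gq (i+1) (N+2)
def TT (k : ℕ) : R := ∑ i ∈ range N, XX^(2*(i+1)*k) * Gq (i+2) (N+2)

lemma pim_Gq_step (i : ℕ) :
    pim (N+2) (Gq (i+1) (N+2)) = pim (N+2) ((1 - XX ^ (2*(i+1))) * Gq (i+2) (N+2)) := by
  rw [show N+2 = (N+1)+1 from rfl, Gq_succ' (i+1) (N+1), map_mul, map_mul]
  congr 1
  exact (pim_Gq_le (by omega) (by omega)).symm

lemma pim_SS_sub (k : ℕ) : pim (N+2) (SS N k) = pim (N+2) (TT N k) - pim (N+2) (TT N (k+1)) := by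
  rw [SS, TT, TT, map_sum, map_sum, map_sum, ← sum_sub_distrib]
  refine Finset.sum_congr rfl fun i _ => ?_
  rw [map_mul, pim_Gq_step, ← map_mul]
  rw [show XX^(2*(i+1)*k) * ((1 - XX ^ (2*(i+1))) * Gq (i+2) (N+2))
      = XX^(2*(i+1)*k) * Gq (i+2) (N+2) - XX^(2*(i+1)*(k+1)) * Gq (i+2) (N+2) from by
    rw [show 2*(i+1)*(k+1) = 2*(i+1)*k + 2*(i+1) from by ring, pow_add]; ring]
  rw [map_sub]

lemma TT_exact (k : ℕ) : XX^(2*k) * TT N k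
    = SS N k + XX^(2*(N+1)*k) * Gq (N+1) (N+2) - XX^(2*k) * Gq 1 (N+2) := by
  set F : ℕ → R := fun i => XX^(2*(i+1)*k) * Gq (i+1) (N+2) with hF
  have h1 : XX^(2*k) * TT N k = ∑ i ∈ range N, F (i+1) := by
    rw [TT, Finset.mul_sum]
    refine Finset.sum_congr rfl fun i _ => ?_
    show XX ^ (2 * k) * (XX ^ (2 * (i + 1) * k) * Gq (i + 2) (N + 2))
      = XX ^ (2 * (i + 1 + 1) * k) * Gq (i + 1 + 1) (N + 2)
    rw [show 2*(i+1+1)*k = 2*k + 2*(i+1)*k from by ring, pow_add]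
    ring
  have h2 : ∑ i ∈ range (N+1), F i = ∑ i ∈ range N, F (i+1) + F 0 := sum_range_succ' F N
  have h3 : ∑ i ∈ range (N+1), F i = ∑ i ∈ range N, F i + F N := sum_range_succ F N
  have hSS : SS N k = ∑ i ∈ range N, F i := rfl
  have hF0 : F 0 = XX^(2*k) * Gq 1 (N+2) := by show XX^(2*(0+1)*k) * Gq (0+1) (N+2) = _; norm_num
  have hFN : F N = XX^(2*(N+1)*k) * Gq (N+1) (N+2) := rfl
  rw [h1, hSS, ← hF0, ← hFN]
  have h4 := h2.symm.trans h3
  -- h4 : ∑ F (i+1) + F 0 = ∑ F i + F N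
  have : ∑ i ∈ range N, F (i+1) = ∑ i ∈ range N, F i + F N - F 0 := by
    rw [← h4]; ring
  rw [this]

lemma pim_TT_pos (k : ℕ) (hk : 1 ≤ k) :
    pim (N+2) (XX^(2*k)) * pim (N+2) (TT N k)
      = pim (N+2) (SS N k) - pim (N+2) (XX^(2*k) * Gq 1 (N+2)) := by
  have h := congrArg (pim (N+2)) (TT_exact N k)
  rw [map_mul, map_sub, map_add, map_mul] at h
  rw [pim_Xpow (show N+2 ≤ 2*(N+1)*k from by nlinarith), zero_mul, add_zero] at h
  exact h

lemma pim_TT_zero :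
    pim (N+2) (TT N 0) = pim (N+2) (SS N 0) - pim (N+2) (Gq 1 (N+2)) + 1 := by
  have h := congrArg (pim (N+2)) (TT_exact N 0)
  rw [map_mul, map_sub, map_add, map_mul] at h
  rw [pim_Gq_one (N+2) (show N+2 ≤ 2*(N+1) from by omega)] at h
  norm_num at h
  linear_combination h

lemma pim_SS_one : pim (N+2) (SS N 1) = pim (N+2) ((XX:R)^2) := by
  have ha := pim_SS_sub N 0
  have hb := pim_TT_zero N
  have hc := pim_TT_pos N 1 le_rfl
  have hd : pim (N+2) ((XX:R)^(2*1)) = pim (N+2) ((XX:R)^2) := by norm_num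
  have he : pim (N+2) (XX^(2*1) * Gq 1 (N+2)) = pim (N+2) ((XX:R)^2) * pim (N+2) (Gq 1 (N+2)) := by
    rw [map_mul, hd]
  -- multiply ha by X^2 image and combine
  linear_combination (pim (N+2) ((XX:R)^2)) * ha + (pim (N+2) ((XX:R)^2)) * hb
    - hc - hd * (pim (N+2) (TT N 1)) + he

lemma pim_SS_step (k : ℕ) (hk : 1 ≤ k) :
    pim (N+2) (SS N (k+1))
      = (pim (N+2) ((XX:R)^2) - pim (N+2) ((XX:R)^(2*(k+1)))) * pim (N+2) (SS N k) := by
  have ha := pim_SS_sub N k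
  have hc := pim_TT_pos N k hk
  have hd := pim_TT_pos N (k+1) (by omega)
  have hx : pim (N+2) ((XX:R)^(2*(k+1))) = pim (N+2) ((XX:R)^2) * pim (N+2) ((XX:R)^(2*k)) := by
    rw [← map_mul, ← pow_add]
    congr 2
    omega
  have he : pim (N+2) (XX^(2*(k+1)) * Gq 1 (N+2))
      = pim (N+2) ((XX:R)^2) * pim (N+2) (XX^(2*k) * Gq 1 (N+2)) := by
    rw [map_mul, map_mul, hx]; ring
  linear_combination he + (pim (N+2) ((XX:R)^2) * pim (N+2) ((XX:R)^(2*k))) * ha - hd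
    + (pim (N+2) (TT N (k+1)) + pim (N+2) (SS N k)) * hx + pim (N+2) ((XX:R)^2) * hc

lemma pim_SS_closed : ∀ m : ℕ, pim (N+2) (SS N (m+1)) = pim (N+2) (XX^(2*(m+1)) * Gk m) := by
  intro m
  induction m with
  | zero =>
    rw [pim_SS_one]
    rw [show Gk 0 = 1 from rfl, mul_one]
  | succ m ih =>
    have hx0 : ((XX:R))^(2*m+2) = (XX:R)^(2*(m+1)) := by
      rw [show 2*m+2 = 2*(m+1) from by omega]
    rw [pim_SS_step N (m+1) (by omega), ih, Gk_succ, map_mul, map_mul, map_mul, map_sub,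
      map_one, hx0]
    have hx1 : pim (N+2) ((XX:R)^(2*(m+1+1))) = pim (N+2) ((XX:R)^2) * pim (N+2) ((XX:R)^(2*(m+1))) := by
      rw [← map_mul, ← pow_add, show 2*(m+1+1) = 2 + 2*(m+1) by omega]
    rw [hx1]; ring

end S
lemma sum_Icc_one {M : Type*} [AddCommMonoid M] (N : ℕ) (f : ℕ → M) :
    ∑ n ∈ Icc 1 N, f n = ∑ i ∈ range N, f (i+1) := by
  induction N with
  | zero => simp
  | succ N ih => rw [sum_Icc_succ_top (by omega), ih, sum_range_succ]

theorem main (N : ℕ) :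
    PowerSeries.coeff (R := Polynomial ℤ) N
      (∑ n ∈ Finset.Icc 1 N,
        (-(PowerSeries.C (R := Polynomial ℤ) Polynomial.X)) * PowerSeries.X ^ (2 * n - 1) *
          (∏ j ∈ Finset.range (N + 1), (1 - PowerSeries.X ^ (2 * n + 2 * j))) *
          (∏ j ∈ Finset.range (N + 1),
            (1 - PowerSeries.C (R := Polynomial ℤ) Polynomial.X *
              PowerSeries.X ^ (2 * n + 1 + 2 * j)))) =
    PowerSeries.coeff (R := Polynomial ℤ) N
      (∑ n ∈ Finset.Icc 1 N,
        (-(PowerSeries.C (R := Polynomial ℤ) Polynomial.X)) ^ n * PowerSeries.X ^ (n ^ 2)) := by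
  set L : R := ∑ n ∈ Finset.Icc 1 N,
        (-(PowerSeries.C (R := Polynomial ℤ) Polynomial.X)) * PowerSeries.X ^ (2 * n - 1) *
          (∏ j ∈ Finset.range (N + 1), (1 - PowerSeries.X ^ (2 * n + 2 * j))) *
          (∏ j ∈ Finset.range (N + 1),
            (1 - PowerSeries.C (R := Polynomial ℤ) Polynomial.X *
              PowerSeries.X ^ (2 * n + 1 + 2 * j))) with hL
  set Rs : R := ∑ n ∈ Finset.Icc 1 N,
        (-(PowerSeries.C (R := Polynomial ℤ) Polynomial.X)) ^ n * PowerSeries.X ^ (n ^ 2) with hRs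
  -- reduce to coeff (N+1) of X * _
  rw [show (PowerSeries.coeff (R := Polynomial ℤ) N) L = (PowerSeries.coeff (R := Polynomial ℤ) (N+1)) (XX * L)
    from (PowerSeries.coeff_succ_X_mul N L).symm]
  rw [show (PowerSeries.coeff (R := Polynomial ℤ) N) Rs = (PowerSeries.coeff (R := Polynomial ℤ) (N+1)) (XX * Rs)
    from (PowerSeries.coeff_succ_X_mul N Rs).symm]
  -- suffices: equal mod X^(N+2)
  suffices h : pim (N+2) (XX * L) = pim (N+2) (XX * Rs) by
    have hdvd : (XX:R)^(N+2) ∣ (XX * L - XX * Rs) := by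
      rw [← Ideal.mem_span_singleton]
      exact Ideal.Quotient.eq.mp h
    have hc := (PowerSeries.X_pow_dvd_iff.mp hdvd) (N+1) (by omega)
    rw [map_sub, sub_eq_zero] at hc
    exact hc
  -- rewrite X * L
  have hXL : XX * L = ∑ i ∈ range N,
      (-A) * XX^(2*(i+1)) * Gq (i+1) (N+1) * Pa (i+1) (N+1) := by
    have key : ∀ (u v : R) (e : ℕ), XX * ((-(PowerSeries.C (R := Polynomial ℤ) Polynomial.X)) * XX^e * u * v)
        = (-(PowerSeries.C (R := Polynomial ℤ) Polynomial.X)) * XX^(e+1) * u * v := by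
      intro u v e; rw [pow_succ]; ring
    rw [hL, Finset.mul_sum, sum_Icc_one]
    refine Finset.sum_congr rfl fun i _ => ?_
    simp only [Gq, Pa, A]
    have he : 2*(i+1) - 1 = 2*i+1 := by omega
    rw [he, key, show (2*i+1)+1 = 2*(i+1) from by omega]
  have hXR : XX * Rs = ∑ i ∈ range N, (-A)^(i+1) * XX^((i+1)^2+1) := by
    have key : ∀ (b : R) (k e : ℕ), XX * (b^k * XX^e) = b^k * XX^(e+1) := by
      intro b k e; rw [pow_succ]; ring
    rw [hRs, Finset.mul_sum, sum_Icc_one]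
    refine Finset.sum_congr rfl fun i _ => ?_
    simp only [A]
    rw [key]
  rw [hXL, hXR, map_sum, map_sum]
  -- step 2+3: per-term replacement
  have step1 : ∀ i ∈ range N,
      pim (N+2) ((-A) * XX^(2*(i+1)) * Gq (i+1) (N+1) * Pa (i+1) (N+1))
        = ∑ m ∈ range (N+1), pim (N+2) ((-A)^(m+1) * XX^(m*m) * Eu m)
            * pim (N+2) (XX^(2*(i+1)*(m+1)) * Gq (i+1) (N+2)) := by
    intro i hi
    rw [map_mul, map_mul]
    have hGq : pim (N+2) (Gq (i+1) (N+1)) = pim (N+2) (Gq (i+1) (N+2)) :=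
      (pim_Gq_le (n := i+1) (J := N+1) (by omega) (by omega)).symm
    have hPa : pim (N+2) (Pa (i+1) (N+1)) = pim (N+2) (g N (i+1)) := by
      have h1 : pim (N+2) (Pa (i+1) (N+1)) = pim (N+2) (Pa (i+1) (N+2-(i+1))) := by
        apply pim_Pa_le (n := i+1) (J := N+2-(i+1)) (J' := N+1)
        · have : i < N := mem_range.mp hi
          omega
        · omega
      rw [h1]
      exact pim_Pa_eq_g N (N+1-i) (i+1) (by have : i < N := mem_range.mp hi; omega) (by omega)
    rw [hGq, hPa, g, map_sum, Finset.mul_sum]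
    refine Finset.sum_congr rfl fun m _ => ?_
    rw [← map_mul, ← map_mul, ← map_mul]
    refine congrArg (pim (N+2)) ?_
    have he : 2*(i+1) + m*(2*(i+1)+m) = m*m + 2*(i+1)*(m+1) := by ring
    calc (-A) * XX^(2*(i+1)) * Gq (i+1) (N+2) * ((-A)^m * XX^(m*(2*(i+1)+m)) * Eu m)
        = (-A)^(m+1) * (XX^(2*(i+1)) * XX^(m*(2*(i+1)+m))) * Eu m * Gq (i+1) (N+2) := by ring
      _ = (-A)^(m+1) * XX^(m*m + 2*(i+1)*(m+1)) * Eu m * Gq (i+1) (N+2) := by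
          rw [← pow_add, he]
      _ = (-A)^(m+1) * XX^(m*m) * Eu m * (XX^(2*(i+1)*(m+1)) * Gq (i+1) (N+2)) := by
          rw [pow_add]; ring
  rw [Finset.sum_congr rfl step1, Finset.sum_comm]
  -- step 4: inner sums via SS
  have step2 : ∀ m ∈ range (N+1),
      ∑ i ∈ range N, pim (N+2) ((-A)^(m+1) * XX^(m*m) * Eu m)
          * pim (N+2) (XX^(2*(i+1)*(m+1)) * Gq (i+1) (N+2))
        = pim (N+2) ((-A)^(m+1) * XX^((m+1)^2+1)) := by
    intro m _
    rw [← Finset.mul_sum, ← map_sum]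
    rw [show (∑ i ∈ range N, XX^(2*(i+1)*(m+1)) * Gq (i+1) (N+2)) = SS N (m+1) from rfl]
    rw [pim_SS_closed N m, ← map_mul]
    refine congrArg (pim (N+2)) ?_
    calc (-A)^(m+1) * XX^(m*m) * Eu m * (XX^(2*(m+1)) * Gk m)
        = (-A)^(m+1) * (XX^(m*m) * XX^(2*(m+1))) * (Gk m * Eu m) := by ring
      _ = (-A)^(m+1) * XX^((m+1)^2+1) := by
          rw [Gk_mul_Eu, ← pow_add, mul_one, show m*m + 2*(m+1) = (m+1)^2+1 from by ring]
  rw [Finset.sum_congr rfl step2, sum_range_succ, map_mul,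
    pim_Xpow (show N+2 ≤ (N+1)^2+1 from by nlinarith), mul_zero, add_zero]

end AlladiAux
end


/-- `∑_{n≥1} (-a) q^{2n-1} (q^{2n};q²)_∞ (aq^{2n+1};q²)_∞ = ∑_{n≥1} (-a)^n q^{n²}`,
as an identity of formal power series in `q` over `ℤ[a]`.  Summands with `n > N` and
factors of the infinite products with index `j > N` have no effect on the `N`-th
coefficient, so that coefficient is computed from the displayed finite truncations. -/
theorem alladi_partial_theta (N : ℕ) :
    PowerSeries.coeff (R := Polynomial ℤ) N
      (∑ n ∈ Finset.Icc 1 N,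
        (-(PowerSeries.C (R := Polynomial ℤ) Polynomial.X)) * PowerSeries.X ^ (2 * n - 1) *
          (∏ j ∈ Finset.range (N + 1), (1 - PowerSeries.X ^ (2 * n + 2 * j))) *
          (∏ j ∈ Finset.range (N + 1),
            (1 - PowerSeries.C (R := Polynomial ℤ) Polynomial.X *
              PowerSeries.X ^ (2 * n + 1 + 2 * j)))) =
    PowerSeries.coeff (R := Polynomial ℤ) N
      (∑ n ∈ Finset.Icc 1 N,
        (-(PowerSeries.C (R := Polynomial ℤ) Polynomial.X)) ^ n * PowerSeries.X ^ (n ^ 2)) := by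
  exact AlladiAux.main N
end
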